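/- arXiv:1810.13264 — 6 statements merged into one kernel-verified Lean document; each statement's English description precedes it below -/
import Mathlib

section
/- Let $\{\gamma_j\}_{j\geq 1}$ be a non-negative real sequence with $\sum_{j\geq 1} \gamma_j^{p_2} < \infty$ for some $p_2 > 0$. Then for any $M > 0$ and any $p_1 < 1$, the sum over all finite subsets $\mathfrak{u} \subset \mathbb{N}$ of $|\mathfrak{u}|^{p_1|\mathfrak{u}|} M^{|\mathfrak{u}|} \prod_{j\in\mathfrak{u}} \gamma_j^{p_2}$ is finite. -/
open scoped BigOperators ENNReal NNReal Nat
open Filter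
open scoped BigOperators ENNReal NNReal Nat
open Filter

lemma tsum_pi_fin_prod (g : ℕ → ℝ≥0∞) : ∀ ℓ : ℕ,
    ∑' f : Fin ℓ → ℕ, ∏ i, g (f i) = (∑' n, g n) ^ ℓ := by
  intro ℓ
  induction ℓ with
  | zero => simp [tsum_eq_single (default : Fin 0 → ℕ) (fun b hb => absurd (Subsingleton.elim b default) hb)]
  | succ n ih =>
    rw [← Equiv.tsum_eq (Fin.consEquiv fun _ : Fin (n+1) => ℕ)]
    have : ∀ p : ℕ × (Fin n → ℕ),
        (∏ i, g ((Fin.consEquiv fun _ : Fin (n+1) => ℕ) p i)) = g p.1 * ∏ i, g (p.2 i) := by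
      intro p
      rw [Fin.prod_univ_succ]
      simp [Fin.consEquiv]
    rw [tsum_congr this, ENNReal.tsum_prod']
    simp_rw [ENNReal.tsum_mul_left, ih, ENNReal.tsum_mul_right]
    ring

lemma prod_orderEmb_eq (g : ℕ → ℝ≥0∞) {ℓ : ℕ} (u : Finset ℕ) (hu : u.card = ℓ) :
    (∏ i : Fin ℓ, g (u.orderEmbOfFin hu i)) = ∏ j ∈ u, g j := by
  have himg : Finset.image (u.orderEmbOfFin hu) Finset.univ = u := by
    ext j
    simp only [Finset.mem_image, Finset.mem_univ, true_and]
    constructor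
    · rintro ⟨i, rfl⟩; exact u.orderEmbOfFin_mem hu i
    · intro hj
      have : j ∈ Set.range (u.orderEmbOfFin hu) := by
        rw [Finset.range_orderEmbOfFin]; exact hj
      obtain ⟨i, hi⟩ := this
      exact ⟨i, hi⟩
  conv_rhs => rw [← himg]
  rw [Finset.prod_image (fun a _ b _ h => (u.orderEmbOfFin hu).injective h)]

private def permEmb (ℓ : ℕ) (p : {u : Finset ℕ // u.card = ℓ} × Equiv.Perm (Fin ℓ)) :
    Fin ℓ → ℕ :=
  fun i => p.1.1.orderEmbOfFin p.1.2 (p.2 i)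

lemma fiber_tsum_bound (g : ℕ → ℝ≥0∞) (ℓ : ℕ) :
    (ℓ ! : ℝ≥0∞) * ∑' u : {u : Finset ℕ // u.card = ℓ}, ∏ j ∈ u.1, g j
      ≤ (∑' n, g n) ^ ℓ := by
  classical
  have hinj : Function.Injective (permEmb ℓ) := by
    rintro ⟨⟨u, hu⟩, σ⟩ ⟨⟨v, hv⟩, τ⟩ h
    have hrange : Set.range (permEmb ℓ (⟨⟨u, hu⟩, σ⟩)) = ↑u := by
      have : permEmb ℓ (⟨⟨u, hu⟩, σ⟩) = (u.orderEmbOfFin hu) ∘ σ := rfl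
      rw [this, Function.Surjective.range_comp σ.surjective, Finset.range_orderEmbOfFin]
    have hrange' : Set.range (permEmb ℓ (⟨⟨v, hv⟩, τ⟩)) = ↑v := by
      have : permEmb ℓ (⟨⟨v, hv⟩, τ⟩) = (v.orderEmbOfFin hv) ∘ τ := rfl
      rw [this, Function.Surjective.range_comp τ.surjective, Finset.range_orderEmbOfFin]
    have huv : u = v := by
      apply Finset.coe_injective
      rw [← hrange, ← hrange', h]
    subst huv
    have hστ : σ = τ := by
      ext i
      exact congrArg Fin.val ((u.orderEmbOfFin hu).injective (congrFun h i))
    simp [hστ]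
  have hval : ∀ p : {u : Finset ℕ // u.card = ℓ} × Equiv.Perm (Fin ℓ),
      (∏ j ∈ p.1.1, g j) = ∏ i, g (permEmb ℓ p i) := by
    rintro ⟨⟨u, hu⟩, σ⟩
    rw [← prod_orderEmb_eq g u hu]
    exact (Equiv.prod_comp σ fun i => g (u.orderEmbOfFin hu i)).symm
  calc (ℓ ! : ℝ≥0∞) * ∑' u : {u : Finset ℕ // u.card = ℓ}, ∏ j ∈ u.1, g j
      = ∑' p : {u : Finset ℕ // u.card = ℓ} × Equiv.Perm (Fin ℓ), ∏ j ∈ p.1.1, g j := by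
        rw [ENNReal.tsum_prod']
        rw [← ENNReal.tsum_mul_left]
        refine tsum_congr fun u => ?_
        rw [tsum_fintype]
        have hc : ∀ b : Equiv.Perm (Fin ℓ), (∏ j ∈ (u, b).1.1, g j) = ∏ j ∈ u.1, g j :=
          fun _ => rfl
        rw [Finset.sum_congr rfl fun b _ => hc b, Finset.sum_const, Finset.card_univ,
          Fintype.card_perm, Fintype.card_fin, nsmul_eq_mul]
    _ = ∑' p, (fun f : Fin ℓ → ℕ => ∏ i, g (f i)) (permEmb ℓ p) := tsum_congr hval
    _ ≤ ∑' f : Fin ℓ → ℕ, ∏ i, g (f i) := ENNReal.tsum_comp_le_tsum_of_injective hinj _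
    _ = (∑' n, g n) ^ ℓ := tsum_pi_fin_prod g ℓ

lemma nat_pow_le_exp_mul_factorial (ℓ : ℕ) :
    (ℓ : ℝ) ^ ℓ ≤ Real.exp 1 ^ ℓ * ℓ ! := by
  have h1 : (ℓ : ℝ) ^ ℓ / ℓ ! ≤ Real.exp ℓ := by
    calc (ℓ : ℝ) ^ ℓ / ℓ ! ≤ ∑ i ∈ Finset.range (ℓ + 1), (ℓ : ℝ) ^ i / i ! := by
          refine Finset.single_le_sum (f := fun i => (ℓ : ℝ) ^ i / i !) (fun i _ => ?_)
            (Finset.self_mem_range_succ ℓ)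
          positivity
      _ ≤ Real.exp ℓ := Real.sum_le_exp_of_nonneg (Nat.cast_nonneg ℓ) _
  have h2 : Real.exp (ℓ : ℝ) = Real.exp 1 ^ ℓ := by
    rw [← Real.exp_nat_mul, mul_one]
  rw [div_le_iff₀ (by positivity)] at h1
  calc (ℓ : ℝ) ^ ℓ ≤ Real.exp ℓ * ℓ ! := h1
    _ = Real.exp 1 ^ ℓ * ℓ ! := by rw [h2]

lemma summable_aux (p₁ M T : ℝ) (hp₁ : p₁ < 1) (hM : 0 < M) (hT : 0 ≤ T) :
    Summable (fun ℓ : ℕ => (ℓ : ℝ) ^ (p₁ * ℓ) * M ^ ℓ * T ^ ℓ / ℓ !) := by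
  set c : ℝ := Real.exp 1 * (M * T) with hc
  have hc0 : 0 ≤ c := by positivity
  set q : ℕ → ℝ := fun ℓ => c * (ℓ : ℝ) ^ (p₁ - 1) with hq
  have hq0 : ∀ ℓ, 0 ≤ q ℓ := fun ℓ => mul_nonneg hc0 (Real.rpow_nonneg (Nat.cast_nonneg ℓ) _)
  have ht0 : ∀ ℓ : ℕ, 0 ≤ (ℓ : ℝ) ^ (p₁ * ℓ) * M ^ ℓ * T ^ ℓ / ℓ ! := by
    intro ℓ
    have := Real.rpow_nonneg (Nat.cast_nonneg (α := ℝ) ℓ) (p₁ * ℓ)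
    positivity
  have hbound : ∀ ℓ : ℕ, (ℓ : ℝ) ^ (p₁ * ℓ) * M ^ ℓ * T ^ ℓ / ℓ ! ≤ q ℓ ^ ℓ := by
    intro ℓ
    rcases Nat.eq_zero_or_pos ℓ with rfl | hℓ
    · simp
    have hℓ0 : (0 : ℝ) < ℓ := by exact_mod_cast hℓ
    have e1 : (ℓ : ℝ) ^ (p₁ * (ℓ : ℕ)) = ((ℓ : ℝ) ^ p₁) ^ (ℓ : ℕ) := by
      rw [← Real.rpow_natCast ((ℓ : ℝ) ^ p₁) ℓ, ← Real.rpow_mul hℓ0.le]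
    have e2 : (ℓ : ℝ) ^ p₁ = (ℓ : ℝ) ^ (p₁ - 1) * ℓ := by
      have := Real.rpow_add hℓ0 (p₁ - 1) 1
      rw [sub_add_cancel] at this
      simpa [Real.rpow_one] using this
    have key : (ℓ : ℝ) ^ (p₁ * (ℓ : ℕ)) = ((ℓ : ℝ) ^ (p₁ - 1)) ^ ℓ * (ℓ : ℝ) ^ ℓ := by
      rw [e1, e2, mul_pow]
    have hfac : (0 : ℝ) < ℓ ! := by positivity
    rw [key, div_le_iff₀ hfac]
    have hqpow : q ℓ ^ ℓ = ((ℓ : ℝ) ^ (p₁ - 1)) ^ ℓ * (Real.exp 1 ^ ℓ * (M ^ ℓ * T ^ ℓ)) := by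
      rw [hq, hc]
      rw [mul_pow, mul_pow, mul_pow]
      ring
    have hrn : (0 : ℝ) ≤ ((ℓ : ℝ) ^ (p₁ - 1)) ^ ℓ :=
      pow_nonneg (Real.rpow_nonneg hℓ0.le _) ℓ
    calc ((ℓ : ℝ) ^ (p₁ - 1)) ^ ℓ * (ℓ : ℝ) ^ ℓ * M ^ ℓ * T ^ ℓ
        ≤ ((ℓ : ℝ) ^ (p₁ - 1)) ^ ℓ * (Real.exp 1 ^ ℓ * ℓ !) * M ^ ℓ * T ^ ℓ := by
          gcongr
          exact nat_pow_le_exp_mul_factorial ℓ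
      _ = q ℓ ^ ℓ * ℓ ! := by rw [hqpow]; ring
  have hq_lim : Tendsto q atTop (nhds (0 : ℝ)) := by
    have h1 : Tendsto (fun x : ℝ => x ^ (p₁ - 1)) atTop (nhds 0) := by
      have := tendsto_rpow_neg_atTop (y := 1 - p₁) (by linarith)
      simpa [neg_sub] using this
    have h2 : Tendsto (fun ℓ : ℕ => ((ℓ : ℝ)) ^ (p₁ - 1)) atTop (nhds 0) :=
      h1.comp tendsto_natCast_atTop_atTop
    simpa using h2.const_mul c
  obtain ⟨N, hN⟩ := (hq_lim.eventually (gt_mem_nhds (show (0:ℝ) < 1/2 by norm_num))).exists_forall_of_atTop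
  rw [← summable_nat_add_iff N]
  refine Summable.of_nonneg_of_le (fun n => ht0 (n + N)) (fun n => ?_)
    (summable_geometric_of_lt_one (by norm_num : (0:ℝ) ≤ 1/2) (by norm_num))
  calc (↑(n + N) : ℝ) ^ (p₁ * (n + N : ℕ)) * M ^ (n + N) * T ^ (n + N) / (n + N)!
      ≤ q (n + N) ^ (n + N) := hbound (n + N)
    _ ≤ (1/2 : ℝ) ^ (n + N) := pow_le_pow_left₀ (hq0 _) (le_of_lt (hN (n + N) (Nat.le_add_left N n))) _
    _ ≤ (1/2 : ℝ) ^ n := pow_le_pow_of_le_one (by norm_num) (by norm_num) (Nat.le_add_right n N)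


/-- Lemma 3.1 (modified from Kuo et al.): if `{γ_j}` is a non-negative sequence with
`∑_j γ_j^{p₂} < ∞` for some `p₂ > 0`, then for any `M > 0` and `p₁ < 1` the sum over all
finite subsets `𝔲 ⊂ ℕ` of `|𝔲|^{p₁|𝔲|} M^{|𝔲|} ∏_{j∈𝔲} γ_j^{p₂}` is finite. -/
theorem mdm_sum_over_finite_subsets_finite
    (γ : ℕ → ℝ) (hγ : ∀ j, 0 ≤ γ j) (p₁ p₂ M : ℝ)
    (hp₂ : 0 < p₂) (hsum : Summable (fun j => γ j ^ p₂))
    (hM : 0 < M) (hp₁ : p₁ < 1) :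
    Summable (fun u : Finset ℕ =>
      (u.card : ℝ) ^ (p₁ * u.card) * M ^ u.card * ∏ j ∈ u, γ j ^ p₂) := by
  classical
  -- nonnegativity facts
  have hg0 : ∀ j, 0 ≤ γ j ^ p₂ := fun j => Real.rpow_nonneg (hγ j) p₂
  set F : Finset ℕ → ℝ := fun u =>
    (u.card : ℝ) ^ (p₁ * u.card) * M ^ u.card * ∏ j ∈ u, γ j ^ p₂ with hF
  have hF0 : ∀ u, 0 ≤ F u := by
    intro u
    have h1 : (0:ℝ) ≤ (u.card : ℝ) ^ (p₁ * u.card) := Real.rpow_nonneg (Nat.cast_nonneg _) _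
    have h3 : (0:ℝ) ≤ ∏ j ∈ u, γ j ^ p₂ := Finset.prod_nonneg fun j _ => hg0 j
    positivity
  set g : ℕ → ℝ≥0∞ := fun j => ENNReal.ofReal (γ j ^ p₂) with hg
  set T : ℝ := ∑' j, γ j ^ p₂ with hT
  have hT0 : 0 ≤ T := tsum_nonneg hg0
  have hgsum : ∑' j, g j = ENNReal.ofReal T :=
    (ENNReal.ofReal_tsum_of_nonneg hg0 hsum).symm
  set a : ℕ → ℝ≥0∞ := fun ℓ => ENNReal.ofReal ((ℓ : ℝ) ^ (p₁ * ℓ) * M ^ ℓ) with ha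
  -- decomposition of ofReal F
  have hΦ : ∀ u : Finset ℕ, ENNReal.ofReal (F u) = a u.card * ∏ j ∈ u, g j := by
    intro u
    rw [hF, ha, hg]
    have h1 : (0:ℝ) ≤ (u.card : ℝ) ^ (p₁ * u.card) := Real.rpow_nonneg (Nat.cast_nonneg _) _
    rw [ENNReal.ofReal_mul (by positivity), ENNReal.ofReal_prod_of_nonneg fun j _ => hg0 j]
  -- the key finiteness in ℝ≥0∞
  have key : ∑' u : Finset ℕ, ENNReal.ofReal (F u) ≠ ⊤ := by
    have e1 : ∑' u : Finset ℕ, ENNReal.ofReal (F u)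
        = ∑' x : Σ ℓ : ℕ, {u : Finset ℕ // u.card = ℓ}, ENNReal.ofReal (F x.2.1) :=
      (Equiv.tsum_eq (Equiv.sigmaFiberEquiv Finset.card) fun u => ENNReal.ofReal (F u)).symm
    have e2 : ∑' x : Σ ℓ : ℕ, {u : Finset ℕ // u.card = ℓ}, ENNReal.ofReal (F x.2.1)
        = ∑' ℓ : ℕ, ∑' u : {u : Finset ℕ // u.card = ℓ}, ENNReal.ofReal (F u.1) :=
      ENNReal.tsum_sigma' _
    have e3 : ∀ ℓ : ℕ, ∑' u : {u : Finset ℕ // u.card = ℓ}, ENNReal.ofReal (F u.1)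
        = a ℓ * ∑' u : {u : Finset ℕ // u.card = ℓ}, ∏ j ∈ u.1, g j := by
      intro ℓ
      rw [← ENNReal.tsum_mul_left]
      refine tsum_congr fun u => ?_
      rw [hΦ u.1, u.2]
    have hfacne : ∀ ℓ : ℕ, (ℓ ! : ℝ≥0∞) ≠ 0 := fun ℓ => by
      exact_mod_cast ℓ.factorial_pos.ne'
    have hfacnetop : ∀ ℓ : ℕ, (ℓ ! : ℝ≥0∞) ≠ ⊤ := fun ℓ => ENNReal.natCast_ne_top _
    have e4 : ∀ ℓ : ℕ, (∑' u : {u : Finset ℕ // u.card = ℓ}, ∏ j ∈ u.1, g j)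
        ≤ (∑' n, g n) ^ ℓ / (ℓ ! : ℝ≥0∞) := by
      intro ℓ
      rw [ENNReal.le_div_iff_mul_le (Or.inl (hfacne ℓ)) (Or.inl (hfacnetop ℓ)), mul_comm]
      exact fiber_tsum_bound g ℓ
    have e5 : ∀ ℓ : ℕ, a ℓ * ((∑' n, g n) ^ ℓ / (ℓ ! : ℝ≥0∞))
        = ENNReal.ofReal ((ℓ : ℝ) ^ (p₁ * ℓ) * M ^ ℓ * T ^ ℓ / ℓ !) := by
      intro ℓ
      rw [hgsum, ← ENNReal.ofReal_pow hT0, ha]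
      have : ((ℓ ! : ℕ) : ℝ≥0∞) = ENNReal.ofReal ((ℓ ! : ℕ) : ℝ) := by
        rw [ENNReal.ofReal_natCast]
      rw [this, ← ENNReal.ofReal_div_of_pos (by positivity), ← ENNReal.ofReal_mul ?_]
      · rw [mul_div_assoc]
      · have h1 : (0:ℝ) ≤ (ℓ : ℝ) ^ (p₁ * ℓ) := Real.rpow_nonneg (Nat.cast_nonneg _) _
        positivity
    rw [e1, e2]
    have hle : ∑' ℓ : ℕ, ∑' u : {u : Finset ℕ // u.card = ℓ}, ENNReal.ofReal (F u.1)
        ≤ ∑' ℓ : ℕ, ENNReal.ofReal ((ℓ : ℝ) ^ (p₁ * ℓ) * M ^ ℓ * T ^ ℓ / ℓ !) := by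
      refine ENNReal.tsum_le_tsum fun ℓ => ?_
      rw [e3 ℓ, ← e5 ℓ]
      exact mul_le_mul_right (e4 ℓ) _
    refine ne_top_of_le_ne_top ?_ hle
    rw [← ENNReal.ofReal_tsum_of_nonneg (fun ℓ => ?_) (summable_aux p₁ M T hp₁ hM hT0)]
    · exact ENNReal.ofReal_ne_top
    · have h1 : (0:ℝ) ≤ (ℓ : ℝ) ^ (p₁ * ℓ) := Real.rpow_nonneg (Nat.cast_nonneg _) _
      positivity
  have := ENNReal.summable_toReal key
  refine this.congr fun u => ?_
  rw [ENNReal.toReal_ofReal (hF0 u)]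
end

section
/- Under the assumptions of the active-set construction (positive reals $A_\mathfrak{u}$ indexed by finite subsets of $\mathbb{N}$, $S = \sum_{|\mathfrak{u}|<\infty} A_\mathfrak{u}^{q/\varsigma} < \infty$, $q\geq 1$, $\varsigma>1$), the cardinality of the active set $\mathfrak{U}(\epsilon) = \{\mathfrak{u} : A_\mathfrak{u}^{q(1-1/\varsigma)} > (\epsilon/2)^q/S\}$ satisfies $|\mathfrak{U}(\epsilon)| < (2/\epsilon)^{q/(\varsigma-1)}\, S^{\varsigma/(\varsigma-1)}$. -/
/-- Cardinality of the MDM active set: given positive reals `A_𝔲` indexed by finite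
subsets of `ℕ` with `S = ∑_𝔲 A_𝔲^{q/ς} < ∞`, `q ≥ 1`, `ς > 1`, the active set
`𝔘(ε) = {𝔲 : A_𝔲^{q(1-1/ς)} > (ε/2)^q / S}` is finite and its cardinality is strictly
less than `(2/ε)^{q/(ς-1)} S^{ς/(ς-1)}`. -/
theorem active_set_cardinality_bound
    (A : Finset ℕ → ℝ) (hA : ∀ u, 0 < A u)
    (q ς ε : ℝ) (hq : 1 ≤ q) (hς : 1 < ς) (hε : 0 < ε)
    (hS : Summable (fun u : Finset ℕ => A u ^ (q / ς))) :
    {u : Finset ℕ |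
        A u ^ (q * (1 - 1/ς)) > (ε/2) ^ q / (∑' v : Finset ℕ, A v ^ (q/ς))}.Finite ∧
      (({u : Finset ℕ |
          A u ^ (q * (1 - 1/ς)) > (ε/2) ^ q / (∑' v : Finset ℕ, A v ^ (q/ς))}.ncard : ℝ)
        < (2/ε) ^ (q/(ς-1)) * (∑' v : Finset ℕ, A v ^ (q/ς)) ^ (ς/(ς-1))) := by
  have hq0 : (0:ℝ) < q := lt_of_lt_of_le one_pos hq
  have hς0 : (0:ℝ) < ς := lt_trans one_pos hς
  have hς1 : (0:ℝ) < ς - 1 := by linarith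
  set S := ∑' v : Finset ℕ, A v ^ (q/ς) with hSdef
  have hSpos : 0 < S :=
    Summable.tsum_pos hS (fun v => (Real.rpow_pos_of_pos (hA v) _).le) ∅
      (Real.rpow_pos_of_pos (hA ∅) _)
  have ha : (0:ℝ) < ε/2 := by positivity
  set c : ℝ := ((ε/2)^q / S) ^ (1/(ς-1)) with hcdef
  have hc : 0 < c := by positivity
  -- c ^ (ς-1) = (ε/2)^q / S
  have hcpow : c ^ (ς-1) = (ε/2)^q / S := by
    rw [hcdef, ← Real.rpow_mul (by positivity), one_div,
      inv_mul_cancel₀ hς1.ne', Real.rpow_one]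
  -- membership characterization
  have hiff : ∀ u : Finset ℕ,
      (A u ^ (q * (1 - 1/ς)) > (ε/2) ^ q / S) ↔ c < A u ^ (q/ς) := by
    intro u
    have h1 : A u ^ (q * (1 - 1/ς)) = (A u ^ (q/ς)) ^ (ς - 1) := by
      rw [← Real.rpow_mul (hA u).le]
      congr 1
      field_simp
    rw [h1, ← hcpow]
    exact Real.rpow_lt_rpow_iff hc.le (Real.rpow_pos_of_pos (hA u) _).le hς1
  have hset : {u : Finset ℕ | A u ^ (q * (1 - 1/ς)) > (ε/2) ^ q / S}
      = {u : Finset ℕ | c < A u ^ (q/ς)} := by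
    ext u; exact hiff u
  -- finiteness
  have hfin : {u : Finset ℕ | c < A u ^ (q/ς)}.Finite := by
    have h0 := hS.tendsto_cofinite_zero (Iio_mem_nhds hc)
    rw [Filter.mem_map, Filter.mem_cofinite] at h0
    refine h0.subset ?_
    intro u hu
    simp only [Set.mem_compl_iff, Set.mem_preimage, Set.mem_Iio, not_lt]
    exact le_of_lt hu
  rw [hset]
  refine ⟨hfin, ?_⟩
  -- key identity : RHS * c = S
  have key : (2/ε) ^ (q/(ς-1)) * S ^ (ς/(ς-1)) * c = S := by
    have e1 : ((ε/2)^q / S : ℝ) ^ (1/(ς-1))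
        = (ε/2) ^ (q/(ς-1)) / S ^ (1/(ς-1)) := by
      rw [Real.div_rpow (by positivity) hSpos.le, ← Real.rpow_mul ha.le]
      ring_nf
    have e2 : S ^ (ς/(ς-1)) = S * S ^ (1/(ς-1)) := by
      have : ς/(ς-1) = 1 + 1/(ς-1) := by field_simp; ring
      rw [this, Real.rpow_add hSpos, Real.rpow_one]
    have e3 : (2/ε) ^ (q/(ς-1)) * (ε/2) ^ (q/(ς-1)) = 1 := by
      rw [← Real.mul_rpow (by positivity) ha.le]
      rw [div_mul_div_comm]
      rw [mul_comm 2 ε, div_self (by positivity)]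
      exact Real.one_rpow _
    have hSr : (0:ℝ) < S ^ (1/(ς-1)) := Real.rpow_pos_of_pos hSpos _
    rw [hcdef, e1, e2]
    have e4 : (2/ε)^(q/(ς-1)) * (S * S^(1/(ς-1))) * ((ε/2)^(q/(ς-1)) / S^(1/(ς-1)))
        = ((2/ε)^(q/(ς-1)) * (ε/2)^(q/(ς-1))) * S * (S^(1/(ς-1)) / S^(1/(ς-1))) := by
      ring
    rw [e4, e3, div_self hSr.ne', one_mul, mul_one]
  set R : ℝ := (2/ε) ^ (q/(ς-1)) * S ^ (ς/(ς-1)) with hRdef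
  have hRpos : 0 < R := by positivity
  rcases Set.eq_empty_or_nonempty {u : Finset ℕ | c < A u ^ (q/ς)} with he | hne
  · rw [he]; simpa using hRpos
  · -- nonempty case
    have hT : hfin.toFinset.Nonempty := by
      rwa [Set.Finite.toFinset_nonempty]
    have hsumlt : (hfin.toFinset.card : ℝ) * c < ∑ u ∈ hfin.toFinset, A u ^ (q/ς) := by
      have := Finset.sum_lt_sum_of_nonempty hT
        (f := fun _ => c) (g := fun u => A u ^ (q/ς))
        (fun u hu => by
          have := (hfin.mem_toFinset).mp hu
          exact this)
      simpa [mul_comm] using this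
    have hsumle : ∑ u ∈ hfin.toFinset, A u ^ (q/ς) ≤ S :=
      Summable.sum_le_tsum hfin.toFinset
        (fun u _ => (Real.rpow_pos_of_pos (hA u) _).le) hS
    have hcard : (hfin.toFinset.card : ℝ) * c < R * c := by
      rw [key]; exact lt_of_lt_of_le hsumlt hsumle
    have hlt : (hfin.toFinset.card : ℝ) < R := lt_of_mul_lt_mul_right hcard hc.le
    rwa [Set.ncard_eq_toFinset_card _ hfin]
end

section
/- Let $\gamma_j \leq \eta j^{-\beta}$ for constants $\eta > 0$, $\beta > 0$, let $M > 0$ and set $\gamma_\mathfrak{u} = \prod_{j\in\mathfrak{u}}\gamma_j$, $M_\mathfrak{u} = M^{|\mathfrak{u}|}$. If a finite subset $\mathfrak{u}\subset\mathbb{N}$ of cardinality $n$ satisfies $(\gamma_\mathfrak{u} M_\mathfrak{u})^{c} > \varepsilon_0$ for some $c > 0$ and $\varepsilon_0 > 0$, then $n!/(\eta M)^{n/\beta} < \varepsilon_0^{-1/(\beta c)}$; in particular, using Stirling's bound $(n/e)^n \leq n!$, one obtains $(n/(e(\eta M)^{1/\beta}))^n < \varepsilon_0^{-1/(\beta c)}$.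 -/
open scoped BigOperators

lemma factorial_le_prod_of_zero_not_mem :
    ∀ u : Finset ℕ, 0 ∉ u → u.card.factorial ≤ ∏ j ∈ u, j := by
  intro u
  induction u using Finset.strongInduction with
  | _ u ih =>
    intro hu
    rcases u.eq_empty_or_nonempty with rfl | hne
    · simp
    · have hm : u.max' hne ∈ u := u.max'_mem hne
      set m := u.max' hne with hmdef
      have hcard : u.card ≤ m := by
        have hsub : u ⊆ Finset.Icc 1 m := fun x hx =>
          Finset.mem_Icc.2 ⟨Nat.one_le_iff_ne_zero.2 (fun h => hu (h ▸ hx)), u.le_max' x hx⟩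
        calc u.card ≤ (Finset.Icc 1 m).card := Finset.card_le_card hsub
          _ = m := by simp
      have h2 : (u.erase m).card.factorial ≤ ∏ j ∈ u.erase m, j :=
        ih _ (Finset.erase_ssubset hm) (fun h => hu (Finset.mem_of_mem_erase h))
      have hce : (u.erase m).card = u.card - 1 := Finset.card_erase_of_mem hm
      have hpos : 0 < u.card := Finset.card_pos.2 hne
      have hfac : u.card.factorial = u.card * (u.card - 1).factorial := by
        obtain ⟨k, hk⟩ := Nat.exists_eq_succ_of_ne_zero hpos.ne'
        simp [hk, Nat.factorial_succ]
      calc u.card.factorial = u.card * (u.card - 1).factorial := hfac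
        _ ≤ m * ∏ j ∈ u.erase m, j := by
            exact Nat.mul_le_mul hcard (hce ▸ h2)
        _ = ∏ j ∈ u, j := Finset.mul_prod_erase u (fun j => j) hm

/-- Key estimate for the dimension of the MDM active set: if `γ_j ≤ η j^{-β}` for `j ≥ 1`,
`M > 0`, `γ_𝔲 = ∏_{j∈𝔲} γ_j`, `M_𝔲 = M^{|𝔲|}`, and a finite subset `𝔲 ⊂ {1,2,…}` of
cardinality `n` satisfies `(γ_𝔲 M_𝔲)^c > ε₀`, then `n!/(ηM)^{n/β} < ε₀^{-1/(βc)}`, and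
by Stirling's bound `(n/e)ⁿ ≤ n!` also `(n/(e (ηM)^{1/β}))ⁿ < ε₀^{-1/(βc)}`. -/
theorem active_set_cardinality_key_estimate
    (γ : ℕ → ℝ) (η β M c ε₀ : ℝ)
    (hη : 0 < η) (hβ : 0 < β) (hM : 0 < M) (hc : 0 < c) (hε₀ : 0 < ε₀)
    (hγ0 : ∀ j, 0 ≤ γ j)
    (hγ : ∀ j, 1 ≤ j → γ j ≤ η * (j : ℝ) ^ (-β))
    (u : Finset ℕ) (hu : 0 ∉ u)
    (hbig : ((∏ j ∈ u, γ j) * M ^ u.card) ^ c > ε₀) :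
    (u.card.factorial : ℝ) / (η * M) ^ ((u.card : ℝ) / β) < ε₀ ^ (-(1/(β * c))) ∧
      ((u.card : ℝ) / (Real.exp 1 * (η * M) ^ (1/β))) ^ u.card < ε₀ ^ (-(1/(β * c))) := by
  set n := u.card with hn
  have hfacpos : (0:ℝ) < (n.factorial : ℝ) := by exact_mod_cast n.factorial_pos
  have hηM : (0:ℝ) < η * M := mul_pos hη hM
  -- step 1: bound the product
  have hprod_nat : (n.factorial : ℝ) ≤ (∏ j ∈ u, j : ℕ) := by
    exact_mod_cast factorial_le_prod_of_zero_not_mem u hu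
  have hprodpos : (0:ℝ) < (∏ j ∈ u, (j:ℝ)) := by
    apply Finset.prod_pos
    intro j hj
    exact_mod_cast Nat.pos_of_ne_zero (fun h => hu (h ▸ hj))
  have hcast : ((∏ j ∈ u, j : ℕ) : ℝ) = ∏ j ∈ u, (j:ℝ) := by push_cast; ring
  have key : (∏ j ∈ u, γ j) * M ^ n ≤ (η * M) ^ n * (n.factorial : ℝ) ^ (-β) := by
    have h1 : ∏ j ∈ u, γ j ≤ ∏ j ∈ u, (η * (j:ℝ) ^ (-β)) := by
      apply Finset.prod_le_prod (fun j _ => hγ0 j)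
      intro j hj
      exact hγ j (Nat.one_le_iff_ne_zero.2 (fun h => hu (h ▸ hj)))
    have h2 : ∏ j ∈ u, (η * (j:ℝ) ^ (-β)) = η ^ n * (∏ j ∈ u, (j:ℝ)) ^ (-β) := by
      rw [Finset.prod_mul_distrib, Finset.prod_const, ← Real.finset_prod_rpow]
      intro j hj
      positivity
    have h3 : (∏ j ∈ u, (j:ℝ)) ^ (-β) ≤ (n.factorial : ℝ) ^ (-β) := by
      apply Real.rpow_le_rpow_of_nonpos hfacpos _ (neg_nonpos.2 hβ.le)
      rw [← hcast]; exact hprod_nat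
    calc (∏ j ∈ u, γ j) * M ^ n ≤ (η ^ n * (∏ j ∈ u, (j:ℝ)) ^ (-β)) * M ^ n := by
          apply mul_le_mul_of_nonneg_right _ (by positivity)
          rw [← h2]; exact h1
      _ ≤ (η ^ n * (n.factorial : ℝ) ^ (-β)) * M ^ n := by
          apply mul_le_mul_of_nonneg_right _ (by positivity)
          exact mul_le_mul_of_nonneg_left h3 (by positivity)
      _ = (η * M) ^ n * (n.factorial : ℝ) ^ (-β) := by ring
  -- step 2: raise to c and then 1/(βc)
  have hβc : (0:ℝ) < β * c := mul_pos hβ hc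
  have hstep : ε₀ < ((η * M) ^ n * (n.factorial : ℝ) ^ (-β)) ^ c := by
    refine lt_of_lt_of_le hbig ?_
    exact Real.rpow_le_rpow
      (mul_nonneg (Finset.prod_nonneg fun j _ => hγ0 j) (by positivity)) key hc.le
  have hRHSpos : (0:ℝ) < (η * M) ^ n * (n.factorial : ℝ) ^ (-β) := by positivity
  have hmain : ε₀ ^ (1/(β*c)) < (η * M) ^ ((n:ℝ)/β) / (n.factorial : ℝ) := by
    have := Real.rpow_lt_rpow hε₀.le hstep (by positivity : (0:ℝ) < 1/(β*c))
    rw [← Real.rpow_mul hRHSpos.le] at this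
    have e0 : c * (1/(β*c)) = 1/β := by field_simp
    rw [e0, Real.mul_rpow (by positivity) (by positivity), ← Real.rpow_natCast (η*M) n,
      ← Real.rpow_mul hηM.le, ← Real.rpow_mul hfacpos.le] at this
    have e1 : (n:ℝ) * (1/β) = (n:ℝ)/β := by ring
    have e2 : -β * (1/β) = -1 := by field_simp
    rw [e1, e2, Real.rpow_neg_one] at this
    rw [div_eq_mul_inv]
    exact this
  have hε₀r : ε₀ ^ (-(1/(β*c))) = (ε₀ ^ (1/(β*c)))⁻¹ := by
    rw [← Real.rpow_neg_one, ← Real.rpow_mul hε₀.le]; ring_nf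
  have hεppos : (0:ℝ) < ε₀ ^ (1/(β*c)) := Real.rpow_pos_of_pos hε₀ _
  have hηMnβ : (0:ℝ) < (η * M) ^ ((n:ℝ)/β) := Real.rpow_pos_of_pos hηM _
  have first : (n.factorial : ℝ) / (η * M) ^ ((n:ℝ)/β) < ε₀ ^ (-(1/(β * c))) := by
    rw [hε₀r]
    have h := inv_strictAnti₀ hεppos hmain
    rwa [inv_div] at h
  refine ⟨first, lt_of_le_of_lt ?_ first⟩
  -- Stirling: (n/e)^n ≤ n!
  have hstir : ((n:ℝ) / Real.exp 1) ^ n ≤ (n.factorial : ℝ) := by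
    have h := Real.pow_div_factorial_le_exp (x := (n:ℝ)) (Nat.cast_nonneg n) n
    rw [← Real.exp_one_pow] at h
    rw [div_pow]
    rw [div_le_iff₀ (by positivity)]
    rw [div_le_iff₀ hfacpos] at h
    linarith [h]
  have hpow : (Real.exp 1 * (η * M) ^ (1/β)) ^ n = Real.exp 1 ^ n * (η * M) ^ ((n:ℝ)/β) := by
    rw [mul_pow, ← Real.rpow_natCast ((η*M) ^ (1/β)) n, ← Real.rpow_mul hηM.le]
    congr 1
    field_simp
  rw [div_pow, hpow]
  rw [div_le_div_iff₀ (by positivity) hηMnβ]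
  calc (n:ℝ) ^ n * (η * M) ^ ((n:ℝ)/β)
      ≤ (n.factorial : ℝ) * Real.exp 1 ^ n * (η * M) ^ ((n:ℝ)/β) := by
        have := hstir
        rw [div_pow, div_le_iff₀ (by positivity)] at this
        exact mul_le_mul_of_nonneg_right this hηMnβ.le
    _ = (n.factorial : ℝ) * (Real.exp 1 ^ n * (η * M) ^ ((n:ℝ)/β)) := by ring
end

section
/- For the one-dimensional anchored kernel $K_\alpha$ of smoothness $\alpha \geq 1$ on $[-1/2,1/2]$, one has $\int_{-1/2}^{1/2} K_\alpha(y,y)^{1/2}\,dy \leq \left(I_0(1) - 1 + \frac{1}{((\alpha-1)!)^2(2\alpha-1)2^{2\alpha-1}}\right)^{1/2}$, where $I_0$ is the modified Bessel function of the first kind. -/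
open scoped BigOperators
open intervalIntegral

/-- The one-dimensional anchored reproducing kernel `K_α` of smoothness `α ≥ 1` on
`[-1/2, 1/2]`, anchored at `0`, with the convention `(x-t)_+^0 = 𝟙_{x>t}`. -/
noncomputable def anchoredKernel (α : ℕ) (x y : ℝ) : ℝ :=
  if 0 < x ∧ 0 < y then
    (∑ r ∈ Finset.Icc 1 (α - 1), x ^ r * y ^ r / ((r.factorial : ℝ)) ^ 2)
      + ∫ t in (0:ℝ)..(1/2),
          (if t < x then (x - t) ^ (α - 1) else 0) *
            (if t < y then (y - t) ^ (α - 1) else 0) / (((α - 1).factorial : ℝ)) ^ 2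
  else if x < 0 ∧ y < 0 then
    (∑ r ∈ Finset.Icc 1 (α - 1), x ^ r * y ^ r / ((r.factorial : ℝ)) ^ 2)
      + ∫ t in (-(1/2):ℝ)..0,
          (if x < t then (t - x) ^ (α - 1) else 0) *
            (if y < t then (t - y) ^ (α - 1) else 0) / (((α - 1).factorial : ℝ)) ^ 2
  else 0

lemma auxSummable : Summable (fun r : ℕ => 1 / ((2 ^ (r+1) * ((r+1).factorial : ℝ)) ^ 2)) := by
  have hgeo : Summable fun r : ℕ => (1/4 : ℝ) ^ r :=
    summable_geometric_of_lt_one (by norm_num) (by norm_num)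
  refine Summable.of_nonneg_of_le (fun r => by positivity) (fun r => ?_) hgeo
  have hf : (1:ℝ) ≤ ((r+1).factorial : ℝ) := by
    exact_mod_cast Nat.one_le_iff_ne_zero.mpr (Nat.factorial_ne_zero _)
  have hp : (0:ℝ) < 2 ^ (r+1) := by positivity
  have h2 : (2:ℝ) ^ r ≤ 2 ^ (r+1) * ((r+1).factorial : ℝ) := by
    calc (2:ℝ) ^ r ≤ 2 ^ (r+1) := pow_le_pow_right₀ (by norm_num) (by omega)
      _ = 2 ^ (r+1) * 1 := by ring
      _ ≤ _ := by nlinarith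
  have h1 : (4:ℝ) ^ r ≤ (2 ^ (r+1) * ((r+1).factorial : ℝ)) ^ 2 := by
    have : (4:ℝ) ^ r = ((2:ℝ) ^ r) ^ 2 := by
      rw [← pow_mul, mul_comm, pow_mul]; norm_num
    rw [this]
    have h0 : (0:ℝ) ≤ (2:ℝ) ^ r := by positivity
    nlinarith
  calc 1 / ((2 ^ (r+1) * ((r+1).factorial : ℝ)) ^ 2) ≤ 1 / (4:ℝ) ^ r :=
        one_div_le_one_div_of_le (by positivity) h1
    _ = (1/4:ℝ) ^ r := by rw [one_div_pow]

lemma sumBound (n : ℕ) (z : ℝ) (hz : |z| ≤ 1/2) :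
    (∑ r ∈ Finset.Icc 1 n, z ^ r * z ^ r / ((r.factorial : ℝ)) ^ 2) ≤
      ∑' r : ℕ, 1 / ((2 ^ (r+1) * ((r+1).factorial : ℝ)) ^ 2) := by
  rw [← Finset.Ico_add_one_right_eq_Icc, Finset.sum_Ico_eq_sum_range]
  simp only [Nat.succ_sub_one, Nat.add_sub_cancel]
  have hterm : ∀ i ∈ Finset.range n,
      z ^ (1+i) * z ^ (1+i) / (((1+i).factorial : ℝ)) ^ 2 ≤
        1 / ((2 ^ (i+1) * ((i+1).factorial : ℝ)) ^ 2) := by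
    intro i _
    have hk : 1 + i = i + 1 := by omega
    rw [hk]
    have habs : |z ^ (i+1)| ≤ (1/2 : ℝ) ^ (i+1) := by
      rw [abs_pow]
      exact pow_le_pow_left₀ (abs_nonneg z) hz _
    have hsq : z ^ (i+1) * z ^ (i+1) ≤ ((1/2 : ℝ) ^ (i+1)) ^ 2 := by
      have := sq_abs (z ^ (i+1))
      nlinarith [abs_nonneg (z ^ (i+1)), pow_nonneg (show (0:ℝ) ≤ 1/2 by norm_num) (i+1)]
    have hfpos : (0:ℝ) < (((i+1).factorial : ℝ)) ^ 2 := by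
      have : (0:ℝ) < ((i+1).factorial : ℝ) := by exact_mod_cast Nat.factorial_pos _
      positivity
    calc z ^ (i+1) * z ^ (i+1) / (((i+1).factorial : ℝ)) ^ 2
        ≤ ((1/2 : ℝ) ^ (i+1)) ^ 2 / (((i+1).factorial : ℝ)) ^ 2 := by gcongr
      _ = 1 / ((2 ^ (i+1) * ((i+1).factorial : ℝ)) ^ 2) := by
          rw [div_pow, mul_pow]
          field_simp
          simp
  calc (∑ i ∈ Finset.range n, z ^ (1+i) * z ^ (1+i) / (((1+i).factorial : ℝ)) ^ 2)
      ≤ ∑ i ∈ Finset.range n, 1 / ((2 ^ (i+1) * ((i+1).factorial : ℝ)) ^ 2) :=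
        Finset.sum_le_sum hterm
    _ ≤ _ := Summable.sum_le_tsum _ (fun i _ => by positivity) auxSummable

lemma integralComputePos (n : ℕ) :
    (∫ t in (0:ℝ)..(1/2), (1/2 - t) ^ (2*n)) = (1/2:ℝ) ^ (2*n+1) / (2*(n:ℝ)+1) := by
  rw [intervalIntegral.integral_comp_sub_left (fun s => s ^ (2*n)) (1/2)]
  rw [show (1/2 - 1/2 : ℝ) = 0 by norm_num, show (1/2 - 0 : ℝ) = 1/2 by norm_num]
  rw [integral_pow]
  push_cast
  ring

lemma integralComputeNeg (n : ℕ) :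
    (∫ t in (-(1/2):ℝ)..0, (t + 1/2) ^ (2*n)) = (1/2:ℝ) ^ (2*n+1) / (2*(n:ℝ)+1) := by
  rw [intervalIntegral.integral_comp_add_right (fun s => s ^ (2*n)) (1/2)]
  rw [show (-(1/2) + 1/2 : ℝ) = 0 by norm_num, show ((0:ℝ) + 1/2 : ℝ) = 1/2 by norm_num]
  rw [integral_pow]
  push_cast
  ring

lemma finalEq (n : ℕ) :
    (1/2:ℝ) ^ (2*n+1) / (2*(n:ℝ)+1) / ((n.factorial : ℝ)) ^ 2 =
      1 / (((n.factorial : ℝ)) ^ 2 * (2*(n:ℝ)+1) * 2 ^ (2*n+1)) := by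
  have h1 : (0:ℝ) < (n.factorial : ℝ) := by exact_mod_cast Nat.factorial_pos _
  have h2 : (0:ℝ) < 2*(n:ℝ)+1 := by positivity
  rw [div_pow]
  field_simp
  ring

lemma diagLe (n : ℕ) (y : ℝ) (hy : |y| ≤ 1/2) :
    anchoredKernel (n+1) y y ≤
      (∑' r : ℕ, 1 / ((2 ^ (r+1) * ((r+1).factorial : ℝ)) ^ 2))
        + 1 / (((n.factorial : ℝ)) ^ 2 * (2*(n:ℝ)+1) * 2 ^ (2*n+1)) := by
  have hfpos : (0:ℝ) < ((n.factorial : ℝ)) ^ 2 := by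
    have : (0:ℝ) < (n.factorial : ℝ) := by exact_mod_cast Nat.factorial_pos _
    positivity
  have hT : (0:ℝ) ≤ ∑' r : ℕ, 1 / ((2 ^ (r+1) * ((r+1).factorial : ℝ)) ^ 2) :=
    tsum_nonneg fun r => by positivity
  have hE : (0:ℝ) < 1 / (((n.factorial : ℝ)) ^ 2 * (2*(n:ℝ)+1) * 2 ^ (2*n+1)) := by positivity
  have habs := abs_le.mp hy
  simp only [anchoredKernel, Nat.add_sub_cancel]
  rcases lt_trichotomy y 0 with hneg | hzero | hpos
  · rw [if_neg (by simp [not_lt.mpr hneg.le]), if_pos ⟨hneg, hneg⟩]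
    have hIle : (∫ t in (-(1/2):ℝ)..0,
          (if y < t then (t - y) ^ n else 0) * (if y < t then (t - y) ^ n else 0)
            / ((n.factorial : ℝ)) ^ 2)
        ≤ ∫ t in (-(1/2):ℝ)..0, (t + 1/2) ^ (2*n) / ((n.factorial : ℝ)) ^ 2 := by
      apply intervalIntegral.integral_mono_on (by norm_num)
      · have heq : (fun t => (if y < t then (t - y) ^ n else 0) *
              (if y < t then (t - y) ^ n else 0) / ((n.factorial : ℝ)) ^ 2) =
            Set.indicator (Set.Ioi y)
              (fun t => (t - y) ^ n * (t - y) ^ n / ((n.factorial : ℝ)) ^ 2) := by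
          funext t; by_cases h : y < t <;> simp [Set.indicator, h]
        have hcont : Continuous fun t : ℝ =>
            (t - y) ^ n * (t - y) ^ n / ((n.factorial : ℝ)) ^ 2 := by fun_prop
        have hI := hcont.intervalIntegrable (μ := MeasureTheory.volume) (-(1/2):ℝ) 0
        rw [intervalIntegrable_iff] at hI ⊢
        rw [heq]
        exact hI.indicator measurableSet_Ioi
      · exact ((by fun_prop : Continuous fun t : ℝ =>
            (t + 1/2) ^ (2*n) / ((n.factorial : ℝ)) ^ 2).intervalIntegrable _ _)
      · intro t ht
        by_cases h : y < t
        · simp only [if_pos h]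
          have h1 : (0:ℝ) ≤ t - y := by linarith
          have h2 : t - y ≤ t + 1/2 := by linarith [habs.1]
          have h3 := pow_le_pow_left₀ h1 h2 (2*n)
          rw [show (t-y)^(2*n) = (t-y)^n * (t-y)^n by rw [two_mul, pow_add]] at h3
          gcongr
        · simp only [if_neg h, zero_mul, zero_div]
          have : (0:ℝ) ≤ t + 1/2 := by linarith [ht.1]
          positivity
    refine le_trans (add_le_add (sumBound n y hy) hIle) ?_
    gcongr
    rw [intervalIntegral.integral_div, integralComputeNeg n, finalEq n]
  · subst hzero
    rw [if_neg (by simp), if_neg (by simp)]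
    positivity
  · rw [if_pos ⟨hpos, hpos⟩]
    have hIle : (∫ t in (0:ℝ)..(1/2),
          (if t < y then (y - t) ^ n else 0) * (if t < y then (y - t) ^ n else 0)
            / ((n.factorial : ℝ)) ^ 2)
        ≤ ∫ t in (0:ℝ)..(1/2), (1/2 - t) ^ (2*n) / ((n.factorial : ℝ)) ^ 2 := by
      apply intervalIntegral.integral_mono_on (by norm_num)
      · have heq : (fun t => (if t < y then (y - t) ^ n else 0) *
              (if t < y then (y - t) ^ n else 0) / ((n.factorial : ℝ)) ^ 2) =
            Set.indicator (Set.Iio y)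
              (fun t => (y - t) ^ n * (y - t) ^ n / ((n.factorial : ℝ)) ^ 2) := by
          funext t; by_cases h : t < y <;> simp [Set.indicator, h]
        have hcont : Continuous fun t : ℝ =>
            (y - t) ^ n * (y - t) ^ n / ((n.factorial : ℝ)) ^ 2 := by fun_prop
        have hI := hcont.intervalIntegrable (μ := MeasureTheory.volume) (0:ℝ) (1/2)
        rw [intervalIntegrable_iff] at hI ⊢
        rw [heq]
        exact hI.indicator measurableSet_Iio
      · exact ((by fun_prop : Continuous fun t : ℝ =>
            (1/2 - t) ^ (2*n) / ((n.factorial : ℝ)) ^ 2).intervalIntegrable _ _)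
      · intro t ht
        by_cases h : t < y
        · simp only [if_pos h]
          have h1 : (0:ℝ) ≤ y - t := by linarith
          have h2 : y - t ≤ 1/2 - t := by linarith [habs.2]
          have h3 := pow_le_pow_left₀ h1 h2 (2*n)
          rw [show (y-t)^(2*n) = (y-t)^n * (y-t)^n by rw [two_mul, pow_add]] at h3
          gcongr
        · simp only [if_neg h, zero_mul, zero_div]
          have : (0:ℝ) ≤ 1/2 - t := by linarith [ht.2]
          positivity
    refine le_trans (add_le_add (sumBound n y hy) hIle) ?_
    gcongr
    rw [intervalIntegral.integral_div, integralComputePos n, finalEq n]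

/-- Bound on the integral of the square root of the diagonal of the anchored kernel:
`∫_{-1/2}^{1/2} K_α(y,y)^{1/2} dy ≤ (I₀(1) - 1 + 1/((α-1)!² (2α-1) 2^{2α-1}))^{1/2}`,
where `I₀` is the modified Bessel function of the first kind, so that
`I₀(1) - 1 = ∑_{r ≥ 1} 1/(2^r r!)²`. -/
theorem anchoredKernel_sqrt_diag_integral_le (α : ℕ) (hα : 1 ≤ α) :
    (∫ y in (-(1/2):ℝ)..(1/2), Real.sqrt (anchoredKernel α y y)) ≤
      Real.sqrt ((∑' r : ℕ, 1 / ((2 ^ (r+1) * ((r+1).factorial : ℝ)) ^ 2))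
        + 1 / ((((α - 1).factorial : ℝ)) ^ 2 * ((2 * α - 1 : ℕ) : ℝ) * 2 ^ (2 * α - 1))) := by
  obtain ⟨n, rfl⟩ : ∃ n, α = n + 1 := ⟨α - 1, by omega⟩
  have e1 : (n + 1) - 1 = n := by omega
  have e2 : 2 * (n + 1) - 1 = 2*n + 1 := by omega
  rw [e1, e2]
  have e3 : ((2*n+1 : ℕ) : ℝ) = 2*(n:ℝ)+1 := by push_cast; ring
  rw [e3]
  set B := (∑' r : ℕ, 1 / ((2 ^ (r+1) * ((r+1).factorial : ℝ)) ^ 2))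
        + 1 / (((n.factorial : ℝ)) ^ 2 * (2*(n:ℝ)+1) * 2 ^ (2*n+1)) with hB
  have hBnn : 0 ≤ B := by
    have hT : (0:ℝ) ≤ ∑' r : ℕ, 1 / ((2 ^ (r+1) * ((r+1).factorial : ℝ)) ^ 2) :=
      tsum_nonneg fun r => by positivity
    have hfpos : (0:ℝ) < (n.factorial : ℝ) := by exact_mod_cast Nat.factorial_pos _
    have : (0:ℝ) ≤ 1 / (((n.factorial : ℝ)) ^ 2 * (2*(n:ℝ)+1) * 2 ^ (2*n+1)) := by positivity
    exact add_nonneg hT this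
  have hbd : ∀ x ∈ Set.uIoc (-(1/2):ℝ) (1/2),
      ‖Real.sqrt (anchoredKernel (n+1) x x)‖ ≤ Real.sqrt B := by
    intro x hx
    rw [Set.uIoc_of_le (by norm_num)] at hx
    have hxabs : |x| ≤ 1/2 := abs_le.mpr ⟨hx.1.le, hx.2⟩
    rw [Real.norm_eq_abs, abs_of_nonneg (Real.sqrt_nonneg _)]
    exact Real.sqrt_le_sqrt (diagLe n x hxabs)
  calc (∫ y in (-(1/2):ℝ)..(1/2), Real.sqrt (anchoredKernel (n+1) y y))
      ≤ ‖∫ y in (-(1/2):ℝ)..(1/2), Real.sqrt (anchoredKernel (n+1) y y)‖ :=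
        le_abs_self _
    _ ≤ Real.sqrt B * |1/2 - (-(1/2):ℝ)| :=
        intervalIntegral.norm_integral_le_of_norm_le_const hbd
    _ = Real.sqrt B := by norm_num
end

section
/- Parametric regularity (inductive bound): under the assumptions that $a(x,y) = a_0(x) + \sum_j y_j\phi_j(x)$ is uniformly elliptic with $\kappa = \|(\sum_j|\phi_j|/b_j)/(2a_0)\|_{L^\infty} < 1$ and $0 < b_j \leq 1$, for every integer $\alpha \geq 1$, every $k \geq 0$ and every $y \in [-1/2,1/2]^{\mathbb{N}}$: $\sum_{|\nu|=k,\,\nu_j\leq\alpha} b^{-2\nu}\|(\partial_y^\nu u)(\cdot,y)\|_V^2 \leq \left(\frac{2\alpha\kappa}{1-\kappa}\right)^{2k}\frac{\|f\|_{V^*}^2}{(1-\kappa)^2 a_{0,\min}^2}$, where $b^{\nu} = \prod_j b_j^{\nu_j}$. -/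
open MeasureTheory
open scoped RealInnerProductSpace BigOperators

lemma prib_restore (ν : ℕ →₀ ℕ) (j : ℕ) (hj : j ∈ ν.support) :
    (ν - Finsupp.single j 1) + Finsupp.single j 1 = ν := by
  have h1 : 1 ≤ ν j := Nat.one_le_iff_ne_zero.mpr (Finsupp.mem_support_iff.mp hj)
  ext i
  simp only [Finsupp.coe_add, Pi.add_apply, Finsupp.coe_tsub, Pi.sub_apply,
    Finsupp.single_apply]
  by_cases h : j = i
  · subst h; simp; omega
  · simp [h]

lemma prib_level (ν : ℕ →₀ ℕ) (j : ℕ) (hj : j ∈ ν.support) :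
    ((ν - Finsupp.single j 1).sum fun _ m => m) + 1 = ν.sum fun _ m => m := by
  conv_rhs => rw [← prib_restore ν j hj]
  rw [Finsupp.sum_add_index' (fun _ => rfl) (fun _ _ _ => rfl)]
  rw [Finsupp.sum_single_index rfl]

noncomputable def pribW (b : ℕ → ℝ) (ν : ℕ →₀ ℕ) : ℝ :=
  ∏ i ∈ ν.support, b i ^ (2 * ν i)

noncomputable def pribE {X : Type*} [MeasurableSpace X] (μ : Measure X)
    {E : Type*} [NormedAddCommGroup E]
    (a : X → ℝ) (g : (ℕ →₀ ℕ) → X → E) (ν : ℕ →₀ ℕ) : ℝ :=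
  ∫ x, a x * ‖g ν x‖ ^ 2 ∂μ

noncomputable def pribA {X : Type*} [MeasurableSpace X] (μ : Measure X)
    {E : Type*} [NormedAddCommGroup E]
    (g : (ℕ →₀ ℕ) → X → E) (φ : ℕ → X → ℝ) (ν : ℕ →₀ ℕ) (j : ℕ) : ℝ :=
  ∫ x, |φ j x| * ‖g ν x‖ ^ 2 ∂μ

lemma prib_W (b : ℕ → ℝ) (ν : ℕ →₀ ℕ) (j : ℕ) (hj : j ∈ ν.support) :
    pribW b ν = pribW b (ν - Finsupp.single j 1) * b j ^ 2 := by
  have h1 : ∀ σ : ℕ →₀ ℕ, pribW b σ = σ.prod fun i m => b i ^ (2 * m) := fun σ => rfl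
  conv_lhs => rw [h1, ← prib_restore ν j hj]
  rw [Finsupp.prod_add_index' (fun i => by norm_num)
    (fun i m n => by rw [Nat.mul_add, pow_add]), ← h1]
  congr 1
  rw [Finsupp.prod_single_index (by norm_num)]

lemma prib_zero (ν : ℕ →₀ ℕ) (h : (ν.sum fun _ m => m) = 0) : ν = 0 := by
  by_contra hne
  obtain ⟨i, hi⟩ := Finsupp.ne_iff.mp hne
  have hi' : ν i ≠ 0 := by simpa using hi
  have hjs : i ∈ ν.support := Finsupp.mem_support_iff.mpr hi'
  have hle : ν i ≤ ν.sum fun _ m => m := by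
    rw [Finsupp.sum]
    exact Finset.single_le_sum (f := fun i => ν i) (fun _ _ => Nat.zero_le _) hjs
  omega

set_option maxHeartbeats 1000000 in
lemma prib_key
    {X : Type*} [MeasurableSpace X] {μ : Measure X}
    {E : Type*} [NormedAddCommGroup E] [InnerProductSpace ℝ E]
    (g : (ℕ →₀ ℕ) → X → E) (a a₀ : X → ℝ) (φ : ℕ → X → ℝ)
    (b : ℕ → ℝ) (κ a₀min Cf : ℝ) (α : ℕ) (hα : 1 ≤ α)
    (hb : ∀ j, 0 < b j ∧ b j ≤ 1) (hκ : 0 < κ ∧ κ < 1)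
    (ha₀min : 0 < a₀min)
    (ha₀ : ∀ᵐ x ∂μ, a₀min ≤ a₀ x)
    (hκdef : ∀ᵐ x ∂μ, Summable (fun j => |φ j x| / b j) ∧
      (∑' j, |φ j x| / b j) ≤ 2 * κ * a₀ x)
    (ha : ∀ᵐ x ∂μ, (1 - κ) * a₀ x ≤ a x)
    (hInt : ∀ ν : ℕ →₀ ℕ, Integrable (fun x => a x * ‖g ν x‖ ^ 2) μ)
    (hInt'' : ∀ (j : ℕ) (ν : ℕ →₀ ℕ), Integrable (fun x => |φ j x| * ‖g ν x‖ ^ 2) μ)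
    (hLeibniz : ∀ ν : ℕ →₀ ℕ, ν ≠ 0 →
      (∫ x, a x * ‖g ν x‖ ^ 2 ∂μ) =
        -∑ j ∈ ν.support, (ν j : ℝ) *
          ∫ x, φ j x * ⟪g (ν - Finsupp.single j 1) x, g ν x⟫ ∂μ)
    (hbase : (∫ x, a x * ‖g 0 x‖ ^ 2 ∂μ) ≤ Cf ^ 2 / ((1 - κ) * a₀min))
    (k : ℕ) (S : Finset (ℕ →₀ ℕ))
    (hS : ∀ ν ∈ S, (ν.sum fun _ m => m) = k ∧ ∀ j, ν j ≤ α) :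
    ∑ ν ∈ S, (pribW b ν)⁻¹ * pribE μ a g ν
      ≤ (2 * ((α : ℝ) * κ / (1 - κ))) ^ (2 * k) * (Cf ^ 2 / ((1 - κ) * a₀min)) := by
  obtain ⟨hκ0, hκ1⟩ := hκ
  have h1κ : (0:ℝ) < 1 - κ := by linarith
  have hα' : (0:ℝ) < (α:ℝ) := by exact_mod_cast Nat.lt_of_lt_of_le Nat.zero_lt_one hα
  set lam : ℝ := 2 * ((α : ℝ) * κ / (1 - κ)) with hlam
  have hlam0 : 0 < lam := by rw [hlam]; positivity
  have hB : (0:ℝ) ≤ Cf ^ 2 / ((1 - κ) * a₀min) := by positivity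
  have hWpos : ∀ ν : ℕ →₀ ℕ, 0 < pribW b ν :=
    fun ν => Finset.prod_pos fun i _ => pow_pos (hb i).1 _
  have haae : ∀ᵐ x ∂μ, 0 ≤ a x ∧ a₀min ≤ a₀ x ∧ (1 - κ) * a₀ x ≤ a x ∧
      Summable (fun j => |φ j x| / b j) ∧ (∑' j, |φ j x| / b j) ≤ 2 * κ * a₀ x := by
    filter_upwards [ha₀, hκdef, ha] with x h1 h2 h3
    refine ⟨by nlinarith, h1, h3, h2.1, h2.2⟩
  have hEnn : ∀ ν : ℕ →₀ ℕ, 0 ≤ pribE μ a g ν := by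
    intro ν
    apply integral_nonneg_of_ae
    filter_upwards [haae] with x hx
    exact mul_nonneg hx.1 (by positivity)
  have hAnn : ∀ (ν : ℕ →₀ ℕ) (j : ℕ), 0 ≤ pribA μ g φ ν j :=
    fun ν j => integral_nonneg fun x => by positivity
  -- (C)
  have hC : ∀ (J : Finset ℕ) (ν : ℕ →₀ ℕ),
      ∑ j ∈ J, (b j)⁻¹ * pribA μ g φ ν j ≤ (2 * κ / (1 - κ)) * pribE μ a g ν := by
    intro J ν
    have h1 : ∑ j ∈ J, (b j)⁻¹ * pribA μ g φ ν j
        = ∫ x, ∑ j ∈ J, (b j)⁻¹ * (|φ j x| * ‖g ν x‖ ^ 2) ∂μ := by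
      rw [integral_finset_sum J fun j _ => (hInt'' j ν).const_mul _]
      exact Finset.sum_congr rfl fun j _ => (integral_const_mul _ _).symm
    have h2 : (2 * κ / (1 - κ)) * pribE μ a g ν
        = ∫ x, (2 * κ / (1 - κ)) * (a x * ‖g ν x‖ ^ 2) ∂μ := (integral_const_mul _ _).symm
    rw [h1, h2]
    apply integral_mono_ae
    · exact integrable_finset_sum J fun j _ => (hInt'' j ν).const_mul _
    · exact (hInt ν).const_mul _
    · filter_upwards [haae] with x hx
      have hs : ∑ j ∈ J, (b j)⁻¹ * |φ j x| ≤ 2 * κ * a₀ x := by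
        calc ∑ j ∈ J, (b j)⁻¹ * |φ j x| = ∑ j ∈ J, |φ j x| / b j := by
              refine Finset.sum_congr rfl fun j _ => ?_
              rw [div_eq_inv_mul]
          _ ≤ ∑' j, |φ j x| / b j :=
              Summable.sum_le_tsum J (fun j _ => div_nonneg (abs_nonneg _) (hb j).1.le) hx.2.2.2.1
          _ ≤ 2 * κ * a₀ x := hx.2.2.2.2
      have hnn : (0:ℝ) ≤ ‖g ν x‖ ^ 2 := by positivity
      have h3 : 2 * κ * a₀ x ≤ 2 * κ / (1 - κ) * a x := by
        rw [div_mul_eq_mul_div, le_div_iff₀ h1κ]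
        nlinarith [hx.2.2.1]
      calc ∑ j ∈ J, (b j)⁻¹ * (|φ j x| * ‖g ν x‖ ^ 2)
          = (∑ j ∈ J, (b j)⁻¹ * |φ j x|) * ‖g ν x‖ ^ 2 := by
            rw [Finset.sum_mul]
            exact Finset.sum_congr rfl fun j _ => by ring
        _ ≤ (2 * κ * a₀ x) * ‖g ν x‖ ^ 2 := mul_le_mul_of_nonneg_right hs hnn
        _ ≤ (2 * κ / (1 - κ)) * (a x * ‖g ν x‖ ^ 2) := by
            rw [← mul_assoc]
            exact mul_le_mul_of_nonneg_right h3 hnn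
  -- (D)
  have hcross : ∀ (σ ν : ℕ →₀ ℕ) (j : ℕ),
      -(∫ x, φ j x * ⟪g σ x, g ν x⟫ ∂μ)
        ≤ (lam * b j / 2) * pribA μ g φ σ j
          + (1 / (2 * (lam * b j))) * pribA μ g φ ν j := by
    intro σ ν j
    have hbj := (hb j).1
    have ht : 0 < lam * b j := by positivity
    have hintH : Integrable (fun x => (lam * b j / 2) * (|φ j x| * ‖g σ x‖ ^ 2)
        + (1 / (2 * (lam * b j))) * (|φ j x| * ‖g ν x‖ ^ 2)) μ :=
      ((hInt'' j σ).const_mul _).add ((hInt'' j ν).const_mul _)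
    have hptwise : ∀ᵐ x ∂μ, ‖φ j x * ⟪g σ x, g ν x⟫‖
        ≤ (lam * b j / 2) * (|φ j x| * ‖g σ x‖ ^ 2)
          + (1 / (2 * (lam * b j))) * (|φ j x| * ‖g ν x‖ ^ 2) := by
      refine Filter.Eventually.of_forall fun x => ?_
      have h1 : ‖φ j x * ⟪g σ x, g ν x⟫‖ ≤ |φ j x| * (‖g σ x‖ * ‖g ν x‖) := by
        rw [norm_mul, Real.norm_eq_abs, Real.norm_eq_abs]
        exact mul_le_mul_of_nonneg_left (abs_real_inner_le_norm _ _) (abs_nonneg _)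
      have h2 : ‖g σ x‖ * ‖g ν x‖
          ≤ (lam * b j / 2) * ‖g σ x‖ ^ 2 + (1 / (2 * (lam * b j))) * ‖g ν x‖ ^ 2 := by
        rw [show (lam * b j / 2) * ‖g σ x‖ ^ 2 + (1 / (2 * (lam * b j))) * ‖g ν x‖ ^ 2
            = ((lam * b j) ^ 2 * ‖g σ x‖ ^ 2 + ‖g ν x‖ ^ 2) / (2 * (lam * b j)) by
              field_simp, le_div_iff₀ (by positivity)]
        nlinarith [sq_nonneg (lam * b j * ‖g σ x‖ - ‖g ν x‖)]
      calc ‖φ j x * ⟪g σ x, g ν x⟫‖ ≤ |φ j x| * (‖g σ x‖ * ‖g ν x‖) := h1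
        _ ≤ |φ j x| * ((lam * b j / 2) * ‖g σ x‖ ^ 2 + (1 / (2 * (lam * b j))) * ‖g ν x‖ ^ 2) :=
            mul_le_mul_of_nonneg_left h2 (abs_nonneg _)
        _ = (lam * b j / 2) * (|φ j x| * ‖g σ x‖ ^ 2)
            + (1 / (2 * (lam * b j))) * (|φ j x| * ‖g ν x‖ ^ 2) := by ring
    calc -(∫ x, φ j x * ⟪g σ x, g ν x⟫ ∂μ) ≤ ‖∫ x, φ j x * ⟪g σ x, g ν x⟫ ∂μ‖ := by
          rw [Real.norm_eq_abs]; exact neg_le_abs _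
      _ ≤ ∫ x, (lam * b j / 2) * (|φ j x| * ‖g σ x‖ ^ 2)
            + (1 / (2 * (lam * b j))) * (|φ j x| * ‖g ν x‖ ^ 2) ∂μ :=
          norm_integral_le_of_norm_le hintH hptwise
      _ = (lam * b j / 2) * pribA μ g φ σ j
            + (1 / (2 * (lam * b j))) * pribA μ g φ ν j := by
          rw [integral_add (((hInt'' j σ).const_mul _)) ((hInt'' j ν).const_mul _),
            integral_const_mul, integral_const_mul]
          rfl
  induction k generalizing S with
  | zero =>
    have hsub : S ⊆ {0} := by
      intro ν hν
      rcases hS ν hν with ⟨h0, -⟩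
      simp only [Finset.mem_singleton]
      exact prib_zero ν h0
    rcases Finset.subset_singleton_iff.mp hsub with h | h
    · rw [h]
      simpa using hB
    · rw [h, Finset.sum_singleton]
      have hW0 : pribW b 0 = 1 := by simp [pribW]
      have hE0 : pribE μ a g 0 ≤ Cf ^ 2 / ((1 - κ) * a₀min) := hbase
      rw [hW0, inv_one, one_mul]
      simpa using hE0
  | succ k ih =>
    classical
    have hstep : ∀ ν ∈ S,
        (pribW b ν)⁻¹ * pribE μ a g ν
          ≤ lam * (α : ℝ) * ∑ j ∈ ν.support,
              (pribW b (ν - Finsupp.single j 1))⁻¹ *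
                ((b j)⁻¹ * pribA μ g φ (ν - Finsupp.single j 1) j) := by
      intro ν hνS
      obtain ⟨hνk, hνα⟩ := hS ν hνS
      have hν0 : ν ≠ 0 := by
        intro h
        rw [h] at hνk
        simp [Finsupp.sum_zero_index] at hνk
      have hWν := hWpos ν
      have h1 : pribE μ a g ν
          ≤ ∑ j ∈ ν.support, (ν j : ℝ) *
              ((lam * b j / 2) * pribA μ g φ (ν - Finsupp.single j 1) j
                + (1 / (2 * (lam * b j))) * pribA μ g φ ν j) := by
        have hL : pribE μ a g ν = -∑ j ∈ ν.support, (ν j : ℝ) *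
            ∫ x, φ j x * ⟪g (ν - Finsupp.single j 1) x, g ν x⟫ ∂μ := hLeibniz ν hν0
        rw [hL, ← Finset.sum_neg_distrib]
        refine Finset.sum_le_sum fun j hj => ?_
        calc -((ν j : ℝ) * ∫ x, φ j x * ⟪g (ν - Finsupp.single j 1) x, g ν x⟫ ∂μ)
            = (ν j : ℝ) * -(∫ x, φ j x * ⟪g (ν - Finsupp.single j 1) x, g ν x⟫ ∂μ) := by ring
          _ ≤ (ν j : ℝ) *
              ((lam * b j / 2) * pribA μ g φ (ν - Finsupp.single j 1) j
                + (1 / (2 * (lam * b j))) * pribA μ g φ ν j) :=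
              mul_le_mul_of_nonneg_left (hcross _ _ j) (Nat.cast_nonneg _)
      have h2 : (pribW b ν)⁻¹ * pribE μ a g ν
          ≤ ∑ j ∈ ν.support,
              ((lam / 2) * ((ν j : ℝ) * ((pribW b (ν - Finsupp.single j 1))⁻¹ *
                ((b j)⁻¹ * pribA μ g φ (ν - Finsupp.single j 1) j)))
              + (1 / (2 * lam)) * ((ν j : ℝ) * ((pribW b ν)⁻¹ *
                ((b j)⁻¹ * pribA μ g φ ν j)))) := by
        calc (pribW b ν)⁻¹ * pribE μ a g ν
            ≤ (pribW b ν)⁻¹ * ∑ j ∈ ν.support, (ν j : ℝ) *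
              ((lam * b j / 2) * pribA μ g φ (ν - Finsupp.single j 1) j
                + (1 / (2 * (lam * b j))) * pribA μ g φ ν j) :=
              mul_le_mul_of_nonneg_left h1 (inv_nonneg.mpr hWν.le)
          _ = ∑ j ∈ ν.support, (pribW b ν)⁻¹ * ((ν j : ℝ) *
              ((lam * b j / 2) * pribA μ g φ (ν - Finsupp.single j 1) j
                + (1 / (2 * (lam * b j))) * pribA μ g φ ν j)) := Finset.mul_sum _ _ _
          _ = _ := by
              refine Finset.sum_congr rfl fun j hj => ?_
              have hWr := prib_W b ν j hj
              have hWμ := hWpos (ν - Finsupp.single j 1)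
              have hbj := (hb j).1
              rw [hWr]
              field_simp
      rw [Finset.sum_add_distrib] at h2
      have hX : ∑ j ∈ ν.support,
          (lam / 2) * ((ν j : ℝ) * ((pribW b (ν - Finsupp.single j 1))⁻¹ *
            ((b j)⁻¹ * pribA μ g φ (ν - Finsupp.single j 1) j)))
          ≤ (lam * (α : ℝ) / 2) * ∑ j ∈ ν.support,
              (pribW b (ν - Finsupp.single j 1))⁻¹ *
                ((b j)⁻¹ * pribA μ g φ (ν - Finsupp.single j 1) j) := by
        rw [Finset.mul_sum]
        refine Finset.sum_le_sum fun j hj => ?_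
        have hnn : (0:ℝ) ≤ (pribW b (ν - Finsupp.single j 1))⁻¹ *
            ((b j)⁻¹ * pribA μ g φ (ν - Finsupp.single j 1) j) :=
          mul_nonneg (inv_nonneg.mpr (hWpos _).le)
            (mul_nonneg (inv_nonneg.mpr (hb j).1.le) (hAnn _ j))
        have hcast : ((ν j : ℝ)) ≤ (α : ℝ) := by exact_mod_cast hνα j
        calc (lam / 2) * ((ν j : ℝ) * ((pribW b (ν - Finsupp.single j 1))⁻¹ *
              ((b j)⁻¹ * pribA μ g φ (ν - Finsupp.single j 1) j)))
            ≤ (lam / 2) * ((α : ℝ) * ((pribW b (ν - Finsupp.single j 1))⁻¹ *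
              ((b j)⁻¹ * pribA μ g φ (ν - Finsupp.single j 1) j))) :=
              mul_le_mul_of_nonneg_left (mul_le_mul_of_nonneg_right hcast hnn)
                (by positivity)
          _ = (lam * (α : ℝ) / 2) * ((pribW b (ν - Finsupp.single j 1))⁻¹ *
              ((b j)⁻¹ * pribA μ g φ (ν - Finsupp.single j 1) j)) := by ring
      have hY : ∑ j ∈ ν.support,
          (1 / (2 * lam)) * ((ν j : ℝ) * ((pribW b ν)⁻¹ * ((b j)⁻¹ * pribA μ g φ ν j)))
          ≤ (1 / 2) * ((pribW b ν)⁻¹ * pribE μ a g ν) := by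
        have step1 : ∑ j ∈ ν.support,
            (1 / (2 * lam)) * ((ν j : ℝ) * ((pribW b ν)⁻¹ * ((b j)⁻¹ * pribA μ g φ ν j)))
            ≤ ∑ j ∈ ν.support,
              ((α : ℝ) / (2 * lam)) * ((pribW b ν)⁻¹ * ((b j)⁻¹ * pribA μ g φ ν j)) := by
          refine Finset.sum_le_sum fun j hj => ?_
          have hnn : (0:ℝ) ≤ (pribW b ν)⁻¹ * ((b j)⁻¹ * pribA μ g φ ν j) :=
            mul_nonneg (inv_nonneg.mpr hWν.le)
              (mul_nonneg (inv_nonneg.mpr (hb j).1.le) (hAnn ν j))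
          have hcast : ((ν j : ℝ)) ≤ (α : ℝ) := by exact_mod_cast hνα j
          calc (1 / (2 * lam)) * ((ν j : ℝ) * ((pribW b ν)⁻¹ * ((b j)⁻¹ * pribA μ g φ ν j)))
              ≤ (1 / (2 * lam)) * ((α : ℝ) * ((pribW b ν)⁻¹ * ((b j)⁻¹ * pribA μ g φ ν j))) :=
                mul_le_mul_of_nonneg_left (mul_le_mul_of_nonneg_right hcast hnn)
                  (by positivity)
            _ = ((α : ℝ) / (2 * lam)) * ((pribW b ν)⁻¹ * ((b j)⁻¹ * pribA μ g φ ν j)) := by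
                ring
        have step2 : ∑ j ∈ ν.support,
            ((α : ℝ) / (2 * lam)) * ((pribW b ν)⁻¹ * ((b j)⁻¹ * pribA μ g φ ν j))
            ≤ ((α : ℝ) / (2 * lam)) * ((pribW b ν)⁻¹ *
              ((2 * κ / (1 - κ)) * pribE μ a g ν)) := by
          have e1 : ∑ j ∈ ν.support,
              ((α : ℝ) / (2 * lam)) * ((pribW b ν)⁻¹ * ((b j)⁻¹ * pribA μ g φ ν j))
              = ((α : ℝ) / (2 * lam)) * ((pribW b ν)⁻¹ *
                ∑ j ∈ ν.support, (b j)⁻¹ * pribA μ g φ ν j) := by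
            rw [Finset.mul_sum, Finset.mul_sum]
          rw [e1]
          refine mul_le_mul_of_nonneg_left (mul_le_mul_of_nonneg_left (hC _ ν)
            (inv_nonneg.mpr hWν.le)) (by positivity)
        have step3 : ((α : ℝ) / (2 * lam)) * ((pribW b ν)⁻¹ *
              ((2 * κ / (1 - κ)) * pribE μ a g ν))
            = (1 / 2) * ((pribW b ν)⁻¹ * pribE μ a g ν) := by
          rw [hlam]
          field_simp
        exact step1.trans (step2.trans_eq step3)
      have h4 := h2.trans (add_le_add hX hY)
      linarith [h4]
    -- reindex the double sum
    set S' : Finset (ℕ →₀ ℕ) :=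
      S.biUnion (fun ν => ν.support.image fun j => ν - Finsupp.single j 1) with hS'def
    set J : Finset ℕ := S.biUnion (fun ν => ν.support) with hJdef
    have hGnn : ∀ (σ : ℕ →₀ ℕ) (j : ℕ),
        0 ≤ (pribW b σ)⁻¹ * ((b j)⁻¹ * pribA μ g φ σ j) :=
      fun σ j => mul_nonneg (inv_nonneg.mpr (hWpos _).le)
        (mul_nonneg (inv_nonneg.mpr (hb j).1.le) (hAnn _ j))
    have hswap : ∑ ν ∈ S, ∑ j ∈ ν.support,
        (pribW b (ν - Finsupp.single j 1))⁻¹ *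
          ((b j)⁻¹ * pribA μ g φ (ν - Finsupp.single j 1) j)
        ≤ ∑ σ ∈ S', ∑ j ∈ J, (pribW b σ)⁻¹ * ((b j)⁻¹ * pribA μ g φ σ j) := by
      have hinj : ∀ p ∈ S.sigma fun ν => ν.support, ∀ q ∈ S.sigma fun ν => ν.support,
          (fun p : (_ : ℕ →₀ ℕ) × ℕ => ((p.1 - Finsupp.single p.2 1 : ℕ →₀ ℕ), p.2)) p =
          (fun p : (_ : ℕ →₀ ℕ) × ℕ => ((p.1 - Finsupp.single p.2 1 : ℕ →₀ ℕ), p.2)) q →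
          p = q := by
        rintro ⟨ν, j⟩ hp ⟨ν', j'⟩ hq h
        simp only [Finset.mem_sigma] at hp hq
        simp only [Prod.mk.injEq] at h
        obtain ⟨h1, h2⟩ := h
        subst h2
        have hνν' : ν = ν' := by
          have e1 := prib_restore ν j hp.2
          have e2 := prib_restore ν' j hq.2
          rw [← e1, ← e2, h1]
        subst hνν'
        rfl
      calc ∑ ν ∈ S, ∑ j ∈ ν.support,
          (pribW b (ν - Finsupp.single j 1))⁻¹ *
            ((b j)⁻¹ * pribA μ g φ (ν - Finsupp.single j 1) j)
          = ∑ p ∈ S.sigma fun ν => ν.support,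
            (pribW b (p.1 - Finsupp.single p.2 1))⁻¹ *
              ((b p.2)⁻¹ * pribA μ g φ (p.1 - Finsupp.single p.2 1) p.2) := by
            rw [Finset.sum_sigma]
        _ = ∑ q ∈ (S.sigma fun ν => ν.support).image
              (fun p : (_ : ℕ →₀ ℕ) × ℕ => ((p.1 - Finsupp.single p.2 1 : ℕ →₀ ℕ), p.2)),
            (pribW b q.1)⁻¹ * ((b q.2)⁻¹ * pribA μ g φ q.1 q.2) := by
            rw [Finset.sum_image hinj]
        _ ≤ ∑ q ∈ S' ×ˢ J, (pribW b q.1)⁻¹ * ((b q.2)⁻¹ * pribA μ g φ q.1 q.2) := by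
            refine Finset.sum_le_sum_of_subset_of_nonneg ?_ fun q _ _ => hGnn q.1 q.2
            intro q hq
            simp only [Finset.mem_image] at hq
            obtain ⟨p, hp, rfl⟩ := hq
            simp only [Finset.mem_sigma] at hp
            rw [Finset.mem_product]
            constructor
            · rw [hS'def]
              exact Finset.mem_biUnion.mpr ⟨p.1, hp.1,
                Finset.mem_image.mpr ⟨p.2, hp.2, rfl⟩⟩
            · rw [hJdef]
              exact Finset.mem_biUnion.mpr ⟨p.1, hp.1, hp.2⟩
        _ = ∑ σ ∈ S', ∑ j ∈ J, (pribW b σ)⁻¹ * ((b j)⁻¹ * pribA μ g φ σ j) :=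
            Finset.sum_product' (s := S') (t := J)
              (f := fun σ j => (pribW b σ)⁻¹ * ((b j)⁻¹ * pribA μ g φ σ j))
    have hS' : ∀ σ ∈ S', (σ.sum fun _ m => m) = k ∧ ∀ j, σ j ≤ α := by
      intro σ hσ
      rw [hS'def, Finset.mem_biUnion] at hσ
      obtain ⟨ν, hν, hσ⟩ := hσ
      rw [Finset.mem_image] at hσ
      obtain ⟨j, hj, rfl⟩ := hσ
      obtain ⟨hνk, hνα⟩ := hS ν hν
      constructor
      · have := prib_level ν j hj
        omega
      · intro i
        have h0 : (ν - Finsupp.single j 1 : ℕ →₀ ℕ) i ≤ ν i := by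
          rw [Finsupp.tsub_apply]
          exact Nat.sub_le _ _
        exact le_trans h0 (hνα i)
    have hsq : lam * (α : ℝ) * (2 * κ / (1 - κ)) = lam ^ 2 := by
      rw [hlam]
      field_simp
    calc ∑ ν ∈ S, (pribW b ν)⁻¹ * pribE μ a g ν
        ≤ ∑ ν ∈ S, lam * (α : ℝ) * ∑ j ∈ ν.support,
            (pribW b (ν - Finsupp.single j 1))⁻¹ *
              ((b j)⁻¹ * pribA μ g φ (ν - Finsupp.single j 1) j) :=
          Finset.sum_le_sum hstep
      _ = lam * (α : ℝ) * ∑ ν ∈ S, ∑ j ∈ ν.support,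
            (pribW b (ν - Finsupp.single j 1))⁻¹ *
              ((b j)⁻¹ * pribA μ g φ (ν - Finsupp.single j 1) j) :=
          (Finset.mul_sum _ _ _).symm
      _ ≤ lam * (α : ℝ) * ∑ σ ∈ S', ∑ j ∈ J,
            (pribW b σ)⁻¹ * ((b j)⁻¹ * pribA μ g φ σ j) :=
          mul_le_mul_of_nonneg_left hswap (by positivity)
      _ ≤ lam * (α : ℝ) * ∑ σ ∈ S',
            (2 * κ / (1 - κ)) * ((pribW b σ)⁻¹ * pribE μ a g σ) := by
          refine mul_le_mul_of_nonneg_left (Finset.sum_le_sum fun σ _ => ?_) (by positivity)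
          calc ∑ j ∈ J, (pribW b σ)⁻¹ * ((b j)⁻¹ * pribA μ g φ σ j)
              = (pribW b σ)⁻¹ * ∑ j ∈ J, (b j)⁻¹ * pribA μ g φ σ j :=
                (Finset.mul_sum _ _ _).symm
            _ ≤ (pribW b σ)⁻¹ * ((2 * κ / (1 - κ)) * pribE μ a g σ) :=
                mul_le_mul_of_nonneg_left (hC J σ) (inv_nonneg.mpr (hWpos σ).le)
            _ = (2 * κ / (1 - κ)) * ((pribW b σ)⁻¹ * pribE μ a g σ) := by ring
      _ = (lam * (α : ℝ) * (2 * κ / (1 - κ))) *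
            ∑ σ ∈ S', (pribW b σ)⁻¹ * pribE μ a g σ := by
          rw [Finset.mul_sum, Finset.mul_sum]
          exact Finset.sum_congr rfl fun _ _ => by ring
      _ ≤ (lam * (α : ℝ) * (2 * κ / (1 - κ))) *
            (lam ^ (2 * k) * (Cf ^ 2 / ((1 - κ) * a₀min))) := by
          refine mul_le_mul_of_nonneg_left (ih S' hS') ?_
          rw [hsq]
          positivity
      _ = lam ^ (2 * (k + 1)) * (Cf ^ 2 / ((1 - κ) * a₀min)) := by
          rw [hsq, Nat.mul_succ, pow_add]
          ring


set_option maxHeartbeats 1000000 in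
/-- Parametric regularity of the PDE solution (inductive bound). For a fixed parameter
`y ∈ [-1/2,1/2]^ℕ`, `g ν : D → E` represents the gradient `∇(∂_y^ν u)(·, y)` of the mixed
parametric derivative of the solution, so that `‖∂_y^ν u‖_V² = ∫_D ‖g ν‖²` and
`‖∂_y^ν u‖_{V,a}² = ∫_D a ‖g ν‖²`. Assuming the ellipticity conditions
`0 < a₀min ≤ a₀`, `(1-κ) a₀ ≤ a(·,y)`, `∑_j |φ_j|/b_j ≤ 2κ a₀` (i.e. the `L^∞` condition
defining `κ`), `0 < b_j ≤ 1`, `κ < 1`, the Leibniz recursion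
`‖∂^ν u‖_{V,a}² = -∑_{j ∈ supp ν} ν_j ∫_D φ_j ∇(∂^{ν-e_j} u)·∇(∂^ν u)` and the a priori
base bound `‖u‖_{V,a}² ≤ ‖f‖_{V*}²/((1-κ) a₀min)`, one has for every `k ≥ 0` and
integer `α ≥ 1`:
`∑_{|ν|=k, ν_j ≤ α} b^{-2ν} ‖∂^ν u‖_V² ≤ (2ακ/(1-κ))^{2k} ‖f‖_{V*}²/((1-κ)² a₀min²)`. -/
theorem parametric_regularity_inductive_bound
    {X : Type*} [MeasurableSpace X] (μ : Measure X)
    {E : Type*} [NormedAddCommGroup E] [InnerProductSpace ℝ E]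
    (g : (ℕ →₀ ℕ) → X → E) (a a₀ : X → ℝ) (φ : ℕ → X → ℝ)
    (b : ℕ → ℝ) (κ a₀min Cf : ℝ) (α : ℕ) (hα : 1 ≤ α)
    (hb : ∀ j, 0 < b j ∧ b j ≤ 1) (hκ : 0 < κ ∧ κ < 1)
    (ha₀min : 0 < a₀min)
    (ha₀ : ∀ᵐ x ∂μ, a₀min ≤ a₀ x)
    (hκdef : ∀ᵐ x ∂μ, Summable (fun j => |φ j x| / b j) ∧
      (∑' j, |φ j x| / b j) ≤ 2 * κ * a₀ x)
    (ha : ∀ᵐ x ∂μ, (1 - κ) * a₀ x ≤ a x)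
    (hInt : ∀ ν : ℕ →₀ ℕ, Integrable (fun x => a x * ‖g ν x‖ ^ 2) μ)
    (hInt' : ∀ ν : ℕ →₀ ℕ, Integrable (fun x => ‖g ν x‖ ^ 2) μ)
    (hInt'' : ∀ (j : ℕ) (ν : ℕ →₀ ℕ), Integrable (fun x => |φ j x| * ‖g ν x‖ ^ 2) μ)
    (hLeibniz : ∀ ν : ℕ →₀ ℕ, ν ≠ 0 →
      (∫ x, a x * ‖g ν x‖ ^ 2 ∂μ) =
        -∑ j ∈ ν.support, (ν j : ℝ) *
          ∫ x, φ j x * ⟪g (ν - Finsupp.single j 1) x, g ν x⟫ ∂μ)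
    (hbase : (∫ x, a x * ‖g 0 x‖ ^ 2 ∂μ) ≤ Cf ^ 2 / ((1 - κ) * a₀min))
    (k : ℕ) :
    (∑' ν : {ν : ℕ →₀ ℕ // (ν.sum fun _ m => m) = k ∧ ∀ j, ν j ≤ α},
        (∏ j ∈ ν.1.support, b j ^ (2 * ν.1 j))⁻¹ * ∫ x, ‖g ν.1 x‖ ^ 2 ∂μ)
      ≤ (2 * (α : ℝ) * κ / (1 - κ)) ^ (2 * k) *
          (Cf ^ 2 / ((1 - κ) ^ 2 * a₀min ^ 2)) := by
  classical
  have h1κ : (0:ℝ) < 1 - κ := by have := hκ.2; linarith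
  have hpos : (0:ℝ) < (1 - κ) * a₀min := by positivity
  have hWpos : ∀ ν : ℕ →₀ ℕ, 0 < pribW b ν :=
    fun ν => Finset.prod_pos fun i _ => pow_pos (hb i).1 _
  have hN : ∀ ν : ℕ →₀ ℕ,
      (∫ x, ‖g ν x‖ ^ 2 ∂μ) ≤ ((1 - κ) * a₀min)⁻¹ * pribE μ a g ν := by
    intro ν
    have h1 : ((1 - κ) * a₀min) * ∫ x, ‖g ν x‖ ^ 2 ∂μ ≤ pribE μ a g ν := by
      have h2 : (∫ x, ((1 - κ) * a₀min) * ‖g ν x‖ ^ 2 ∂μ)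
          ≤ ∫ x, a x * ‖g ν x‖ ^ 2 ∂μ := by
        apply integral_mono_ae ((hInt' ν).const_mul _) (hInt ν)
        filter_upwards [ha₀, ha] with x hx1 hx2
        have h3 : (1 - κ) * a₀min ≤ a x := by nlinarith
        exact mul_le_mul_of_nonneg_right h3 (by positivity)
      calc ((1 - κ) * a₀min) * ∫ x, ‖g ν x‖ ^ 2 ∂μ
          = ∫ x, ((1 - κ) * a₀min) * ‖g ν x‖ ^ 2 ∂μ := (integral_const_mul _ _).symm
        _ ≤ _ := h2
    calc (∫ x, ‖g ν x‖ ^ 2 ∂μ)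
        = ((1 - κ) * a₀min)⁻¹ * (((1 - κ) * a₀min) * ∫ x, ‖g ν x‖ ^ 2 ∂μ) := by
          field_simp
      _ ≤ ((1 - κ) * a₀min)⁻¹ * pribE μ a g ν :=
          mul_le_mul_of_nonneg_left h1 (inv_nonneg.mpr hpos.le)
  have hq : (0:ℝ) ≤ 2 * (α : ℝ) * κ / (1 - κ) :=
    div_nonneg (mul_nonneg (mul_nonneg (by norm_num) (Nat.cast_nonneg α)) hκ.1.le) h1κ.le
  have hRHS : (0:ℝ) ≤ (2 * (α : ℝ) * κ / (1 - κ)) ^ (2 * k) *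
      (Cf ^ 2 / ((1 - κ) ^ 2 * a₀min ^ 2)) :=
    mul_nonneg (pow_nonneg hq _) (div_nonneg (sq_nonneg Cf) (by positivity))
  apply tsum_le_of_sum_le' hRHS
  intro u
  have hterm : ∀ ν ∈ u,
      (∏ j ∈ ν.1.support, b j ^ (2 * ν.1 j))⁻¹ * ∫ x, ‖g ν.1 x‖ ^ 2 ∂μ
        ≤ ((1 - κ) * a₀min)⁻¹ * ((pribW b ν.1)⁻¹ * pribE μ a g ν.1) := by
    intro ν hν
    have he : (∏ j ∈ ν.1.support, b j ^ (2 * ν.1 j)) = pribW b ν.1 := rfl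
    rw [he]
    calc (pribW b ν.1)⁻¹ * ∫ x, ‖g ν.1 x‖ ^ 2 ∂μ
        ≤ (pribW b ν.1)⁻¹ * (((1 - κ) * a₀min)⁻¹ * pribE μ a g ν.1) :=
          mul_le_mul_of_nonneg_left (hN ν.1) (inv_nonneg.mpr (hWpos ν.1).le)
      _ = ((1 - κ) * a₀min)⁻¹ * ((pribW b ν.1)⁻¹ * pribE μ a g ν.1) := by ring
  calc ∑ ν ∈ u, (∏ j ∈ ν.1.support, b j ^ (2 * ν.1 j))⁻¹ * ∫ x, ‖g ν.1 x‖ ^ 2 ∂μ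
      ≤ ∑ ν ∈ u, ((1 - κ) * a₀min)⁻¹ * ((pribW b ν.1)⁻¹ * pribE μ a g ν.1) :=
        Finset.sum_le_sum hterm
    _ = ((1 - κ) * a₀min)⁻¹ * ∑ ν ∈ u, (pribW b ν.1)⁻¹ * pribE μ a g ν.1 :=
        (Finset.mul_sum _ _ _).symm
    _ = ((1 - κ) * a₀min)⁻¹ *
        ∑ σ ∈ u.image (fun ν => ν.1), (pribW b σ)⁻¹ * pribE μ a g σ := by
        rw [Finset.sum_image (fun x _ y _ h => Subtype.ext h)]
    _ ≤ ((1 - κ) * a₀min)⁻¹ *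
        ((2 * ((α : ℝ) * κ / (1 - κ))) ^ (2 * k) * (Cf ^ 2 / ((1 - κ) * a₀min))) := by
        refine mul_le_mul_of_nonneg_left ?_ (inv_nonneg.mpr hpos.le)
        refine prib_key g a a₀ φ b κ a₀min Cf α hα hb hκ ha₀min ha₀ hκdef ha hInt hInt''
          hLeibniz hbase k _ ?_
        intro σ hσ
        rw [Finset.mem_image] at hσ
        obtain ⟨ν, hν, rfl⟩ := hσ
        exact ν.2
    _ = (2 * (α : ℝ) * κ / (1 - κ)) ^ (2 * k) *
        (Cf ^ 2 / ((1 - κ) ^ 2 * a₀min ^ 2)) := by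
        have h2 : ((1:ℝ) - κ) ≠ 0 := ne_of_gt h1κ
        have h3 : a₀min ≠ 0 := ne_of_gt ha₀min
        rw [show (2 * ((α : ℝ) * κ / (1 - κ))) = 2 * (α : ℝ) * κ / (1 - κ) by ring]
        field_simp
end

section
/- Lagrange-multiplier cost bound for MDM sample sizes: let $\lambda > 0$, $q \geq 1$, and for each $\mathfrak{u}$ in a finite index set $U$ let $c_\mathfrak{u} > 0$ (error constants) and $\pounds_\mathfrak{u} > 0$ (costs). Define $n_\mathfrak{u} = \lceil k_\mathfrak{u}\rceil$ with $k_\mathfrak{u} = (2/\epsilon)^{1/\lambda}\,T^{1/(q\lambda)}\,(c_\mathfrak{u}^q/\pounds_\mathfrak{u})^{1/(q\lambda+1)}$ where $T := \sum_{\mathfrak{v}\in U} \pounds_\mathfrak{v}^{q\lambda/(q\lambda+1)} c_\mathfrak{v}^{q/(q\lambda+1)}$. Then $\left(\sum_{\mathfrak{u}\in U} c_\mathfrak{u}^q / n_\mathfrak{u}^{q\lambda}\right)^{1/q} \leq \epsilon/2$, and $\sum_{\mathfrak{u}\in U} k_\mathfrak{u}\pounds_\mathfrak{u} = (2/\epsilon)^{1/\lambda}\,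 T^{(q\lambda+1)/(q\lambda)}$. -/
open scoped BigOperators

/-- Lagrange-multiplier cost bound for the MDM sample sizes: with error constants
`c_𝔲 > 0`, costs `£_𝔲 > 0`, `T = ∑_𝔳 £_𝔳^{qλ/(qλ+1)} c_𝔳^{q/(qλ+1)}` and
`n_𝔲 = ⌈k_𝔲⌉` where `k_𝔲 = (2/ε)^{1/λ} T^{1/(qλ)} (c_𝔲^q/£_𝔲)^{1/(qλ+1)}`, the error
constraint `(∑_𝔲 c_𝔲^q / n_𝔲^{qλ})^{1/q} ≤ ε/2` holds, and the (idealized) cost equals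
`∑_𝔲 k_𝔲 £_𝔲 = (2/ε)^{1/λ} T^{(qλ+1)/(qλ)}`. -/
theorem mdm_lagrange_cost_bound
    {ι : Type*} [Fintype ι] (ε lam q : ℝ)
    (hε : 0 < ε) (hlam : 0 < lam) (hq : 1 ≤ q)
    (c L : ι → ℝ) (hc : ∀ i, 0 < c i) (hL : ∀ i, 0 < L i)
    (T : ℝ) (hT : T = ∑ i, L i ^ (q * lam / (q * lam + 1)) * c i ^ (q / (q * lam + 1)))
    (k : ι → ℝ)
    (hk : ∀ i, k i = (2 / ε) ^ (1 / lam) * T ^ (1 / (q * lam)) *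
      (c i ^ q / L i) ^ (1 / (q * lam + 1)))
    (n : ι → ℕ) (hn : ∀ i, n i = ⌈k i⌉₊) :
    (∑ i, c i ^ q / (n i : ℝ) ^ (q * lam)) ^ (1 / q) ≤ ε / 2 ∧
      ∑ i, k i * L i = (2 / ε) ^ (1 / lam) * T ^ ((q * lam + 1) / (q * lam)) := by
  have hq0 : (0:ℝ) < q := lt_of_lt_of_le one_pos hq
  have hA : (0:ℝ) < q * lam := mul_pos hq0 hlam
  have hA1 : (0:ℝ) < q * lam + 1 := by linarith
  obtain hι | hι := isEmpty_or_nonempty ι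
  · have hT0 : T = 0 := by simp [hT]
    constructor
    · rw [Finset.univ_eq_empty, Finset.sum_empty, Real.zero_rpow (by positivity)]
      positivity
    · rw [Finset.univ_eq_empty, Finset.sum_empty, hT0,
        Real.zero_rpow (by positivity), mul_zero]
  · have hTpos : 0 < T := by
      rw [hT]
      exact Finset.sum_pos (fun i _ => by have := hc i; have := hL i; positivity)
        Finset.univ_nonempty
    have hkpos : ∀ i, 0 < k i := fun i => by
      rw [hk]
      have := hc i; have := hL i; positivity
    have hE : (0:ℝ) < 2 / ε := by positivity
    -- exponent identities
    have e1 : (1 / lam) * (q * lam) = q := by field_simp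
    have e2 : (1 / (q * lam)) * (q * lam) = 1 := by field_simp
    have e3 : (1 / (q * lam + 1)) * (q * lam) = q * lam / (q * lam + 1) := by ring
    have hkpow : ∀ i, k i ^ (q * lam)
        = (2 / ε) ^ q * T * (c i ^ q / L i) ^ (q * lam / (q * lam + 1)) := by
      intro i
      have := hc i; have := hL i
      rw [hk i, Real.mul_rpow (by positivity) (by positivity),
        Real.mul_rpow (by positivity) (by positivity),
        ← Real.rpow_mul hE.le, ← Real.rpow_mul hTpos.le,
        ← Real.rpow_mul (by positivity), e1, e2, e3, Real.rpow_one]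
    have h2e : (2 / ε : ℝ) = (ε / 2)⁻¹ := (inv_div ε 2).symm
    have hQ : (2 / ε : ℝ) ^ q = ((ε / 2) ^ q)⁻¹ := by
      rw [h2e, ← Real.inv_rpow (by positivity)]
    -- term identity
    have hterm : ∀ i, c i ^ q / k i ^ (q * lam)
        = (ε / 2) ^ q / T *
          (L i ^ (q * lam / (q * lam + 1)) * c i ^ (q / (q * lam + 1))) := by
      intro i
      have hci := hc i; have hLi := hL i
      rw [hkpow i, Real.div_rpow (by positivity) hLi.le,
        ← Real.rpow_mul hci.le]
      have hsplit : c i ^ q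
          = c i ^ (q * (q * lam / (q * lam + 1))) * c i ^ (q / (q * lam + 1)) := by
        rw [← Real.rpow_add hci]
        congr 1
        field_simp
      rw [hsplit, hQ]
      have h1 : (0:ℝ) < c i ^ (q * (q * lam / (q * lam + 1))) := by positivity
      have h2 : (0:ℝ) < L i ^ (q * lam / (q * lam + 1)) := by positivity
      have h3 : (0:ℝ) < c i ^ (q / (q * lam + 1)) := by positivity
      have h4 : (0:ℝ) < (ε / 2) ^ q := by positivity
      generalize c i ^ (q * (q * lam / (q * lam + 1))) = X at h1 ⊢
      generalize c i ^ (q / (q * lam + 1)) = Y at h3 ⊢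
      generalize L i ^ (q * lam / (q * lam + 1)) = Z at h2 ⊢
      generalize (ε / 2 : ℝ) ^ q = P at h4 ⊢
      field_simp
    -- sum identity from hT
    have hsum : ∑ i, c i ^ q / k i ^ (q * lam) = (ε / 2) ^ q := by
      rw [Finset.sum_congr rfl fun i _ => hterm i, ← Finset.mul_sum, ← hT]
      field_simp
    constructor
    · have hle : ∑ i, c i ^ q / (n i : ℝ) ^ (q * lam) ≤ (ε / 2) ^ q := by
        rw [← hsum]
        apply Finset.sum_le_sum
        intro i _
        have hki := hkpos i
        have hkn : k i ≤ (n i : ℝ) := by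
          rw [hn i]; exact Nat.le_ceil _
        have : k i ^ (q * lam) ≤ (n i : ℝ) ^ (q * lam) :=
          Real.rpow_le_rpow hki.le hkn hA.le
        exact div_le_div_of_nonneg_left (by have := hc i; positivity)
          (Real.rpow_pos_of_pos hki _) this
      calc (∑ i, c i ^ q / (n i : ℝ) ^ (q * lam)) ^ (1 / q)
          ≤ ((ε / 2) ^ q) ^ (1 / q) := by
            apply Real.rpow_le_rpow _ hle (by positivity)
            apply Finset.sum_nonneg
            intro i _
            have hki := hkpos i
            have : (0:ℝ) < (n i : ℝ) := lt_of_lt_of_le hki (by rw [hn i]; exact Nat.le_ceil _)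
            have := hc i
            positivity
        _ = ε / 2 := by
            rw [← Real.rpow_mul (by positivity), mul_one_div, div_self (ne_of_gt hq0),
              Real.rpow_one]
    · have hcost : ∀ i, k i * L i
          = (2 / ε) ^ (1 / lam) * T ^ (1 / (q * lam)) *
            (L i ^ (q * lam / (q * lam + 1)) * c i ^ (q / (q * lam + 1))) := by
        intro i
        have hci := hc i; have hLi := hL i
        rw [hk i, Real.div_rpow (by positivity) hLi.le, ← Real.rpow_mul hci.le]
        rw [show q * (1 / (q * lam + 1)) = q / (q * lam + 1) by ring]
        have hLd : L i ^ (q * lam / (q * lam + 1)) = L i / L i ^ (1 / (q * lam + 1)) := by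
          rw [show q * lam / (q * lam + 1) = 1 - 1 / (q * lam + 1) by field_simp; ring,
            Real.rpow_sub hLi, Real.rpow_one]
        rw [hLd]
        have h1 : (0:ℝ) < L i ^ (1 / (q * lam + 1)) := by positivity
        field_simp
      rw [Finset.sum_congr rfl fun i _ => hcost i, ← Finset.mul_sum, ← hT, mul_assoc]
      congr 1
      nth_rewrite 2 [← Real.rpow_one T]
      rw [← Real.rpow_add hTpos]
      congr 1
      rw [add_div, div_self (ne_of_gt hA)]
      ring
end
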